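/- arXiv:1301.4623 — 6 statements merged into one kernel-verified Lean document; each statement's English description precedes it below -/
import Mathlib

section
/- Let n = 3r + q with r ≥ 1 and 0 ≤ q ≤ 2, and let G be a connected graph on n vertices with κ̄₃(G) = 1. Then the number of edges of G satisfies e(G) ≤ (4n − 3 − q)/3. -/
open SimpleGraph

/-- An `S`-Steiner tree in `G`: a subgraph that is a tree and contains `S`. -/
def SimpleGraph.IsSteinerTree {V : Type*} (G : SimpleGraph V) (S : Set V)
    (T : G.Subgraph) : Prop :=
  S ⊆ T.verts ∧ T.coe.IsTree

/-- `κ(S)`: the maximum number of pairwise internally disjoint `S`-Steiner trees in `G`. -/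
noncomputable def SimpleGraph.steinerConn {V : Type*} (G : SimpleGraph V) (S : Set V) : ℕ :=
  sSup {n : ℕ | ∃ f : Fin n → G.Subgraph,
    (∀ i, G.IsSteinerTree S (f i)) ∧
    ∀ i j, i ≠ j →
      (f i).edgeSet ∩ (f j).edgeSet = ∅ ∧ (f i).verts ∩ (f j).verts = S}

/-- `κ̄ₖ(G) = max {κ(S) : S ⊆ V(G), |S| = k}`, the maximal generalized local connectivity. -/
noncomputable def SimpleGraph.kappaBar {V : Type*} (G : SimpleGraph V) (k : ℕ) : ℕ :=
  sSup {m : ℕ | ∃ S : Finset V, S.card = k ∧ G.steinerConn ↑S = m}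

/-- `p` is an ear of the cycle `c` in `G`: a nontrivial path (whose two endpoints may
coincide) meeting `c` exactly in its endpoints. -/
def SimpleGraph.IsEar {V : Type*} (G : SimpleGraph V) {x u v : V}
    (c : G.Walk x x) (p : G.Walk u v) : Prop :=
  0 < p.length ∧ u ∈ c.support ∧ v ∈ c.support ∧
  p.support.tail.Nodup ∧ (u = v ∨ u ∉ p.support.tail) ∧
  ∀ w ∈ p.support, w ∈ c.support → w = u ∨ w = v


namespace StmtAux

open SimpleGraph Walk

variable {V : Type*}

/-- A path from a vertex to itself has length 0. -/
lemma loop_path_nil {G : SimpleGraph V} {z : V} {p : G.Walk z z} (hp : p.IsPath) :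
    p.length = 0 := by
  cases p with
  | nil => rfl
  | cons h q =>
    exfalso
    rw [Walk.cons_isPath_iff] at hp
    exact hp.2 q.end_mem_support

lemma mem_tail_of_ne {G : SimpleGraph V} {u v x : V} {p : G.Walk u v}
    (hx : x ∈ p.support) (hne : x ≠ u) : x ∈ p.support.tail := by
  rw [p.support_eq_cons] at hx
  rcases List.mem_cons.mp hx with rfl | h
  · exact absurd rfl hne
  · exact h

/-- Every non-nil walk has an edge containing its final vertex. -/
lemma exists_edge_end {G : SimpleGraph V} {u v : V} (p : G.Walk u v) (hp : ¬ p.Nil) :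
    ∃ e ∈ p.edges, v ∈ e := by
  induction p with
  | nil => exact absurd Walk.Nil.nil hp
  | @cons a b c h q ih =>
    by_cases hq : q.Nil
    · have hbc : b = c := hq.eq
      subst hbc
      exact ⟨s(a, b), by simp, by simp⟩
    · obtain ⟨e, he, hve⟩ := ih hq
      exact ⟨e, by simp [he], hve⟩

/-- Any vertex of a cycle has two distinct incident edges in it. -/
lemma cycle_two_incident {G : SimpleGraph V} {x v : V} {d : G.Walk x x}
    (hd : d.IsCycle) (hv : v ∈ d.support) :
    ∃ e1 e2, e1 ∈ d.edges ∧ e2 ∈ d.edges ∧ e1 ≠ e2 ∧ v ∈ e1 ∧ v ∈ e2 := by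
  classical
  set d' := d.rotate v hv with hd'
  have hcyc : d'.IsCycle := hd.rotate hv
  have hmem : ∀ e, e ∈ d'.edges ↔ e ∈ d.edges := fun e => (rotate_edges d v hv).mem_iff
  have hlen : 3 ≤ d'.length := hcyc.three_le_length
  cases hq : d' with
  | nil => rw [hq] at hlen; simp at hlen
  | @cons _ w _ h q =>
    have hqn : ¬ q.Nil := by
      rw [Walk.nil_iff_length_eq]
      rw [hq] at hlen
      simp only [Walk.length_cons] at hlen
      omega
    obtain ⟨e2, he2, hve2⟩ := exists_edge_end q hqn
    have htrail : (Walk.cons h q).IsTrail := by rw [← hq]; exact hcyc.isCircuit.isTrail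
    have hnodup : (s(v, w) :: q.edges).Nodup := by
      have := htrail.edges_nodup
      simpa using this
    have hne : s(v, w) ≠ e2 := by
      intro hcon
      rw [List.nodup_cons] at hnodup
      exact hnodup.1 (hcon ▸ he2)
    refine ⟨s(v, w), e2, ?_, ?_, hne, by simp, hve2⟩
    · rw [← hmem, hq]; simp
    · rw [← hmem, hq]; simp [he2]

/-- No cycle has all of its edges among the edges of a path. -/
lemma no_cycle_in_path {G : SimpleGraph V} {a b : V} {p : G.Walk a b} (hp : p.IsPath)
    {w : V} {d : G.Walk w w} (hd : d.IsCycle) (hsub : ∀ e ∈ d.edges, e ∈ p.edges) :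
    False := by
  induction p with
  | nil =>
    have hlen := hd.three_le_length
    have : d.edges ≠ [] := by
      intro h
      have := d.length_edges
      rw [h] at this
      simp at this
      omega
    obtain ⟨e, he⟩ := List.exists_mem_of_ne_nil _ this
    simpa using hsub e he
  | @cons u c b h q ih =>
    rw [Walk.cons_isPath_iff] at hp
    by_cases hin : s(u, c) ∈ d.edges
    · -- u is on the cycle, so it has two distinct incident edges, both in cons h q
      have hu : u ∈ d.support := d.fst_mem_support_of_mem_edges hin
      obtain ⟨e1, e2, he1, he2, hne, hu1, hu2⟩ := cycle_two_incident hd hu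
      have key : ∀ e ∈ d.edges, u ∈ e → e = s(u, c) := by
        intro e he hue
        have := hsub e he
        simp only [Walk.edges_cons, List.mem_cons] at this
        rcases this with h' | h'
        · exact h'
        · exfalso
          induction e with
          | h x y =>
            simp only [Sym2.mem_iff] at hue
            rcases hue with rfl | rfl
            · exact hp.2 (q.fst_mem_support_of_mem_edges h')
            · exact hp.2 (q.snd_mem_support_of_mem_edges h')
      exact hne ((key e1 he1 hu1).trans (key e2 he2 hu2).symm)
    · refine ih hp.1 ?_
      intro e he
      have := hsub e he
      simp only [Walk.edges_cons, List.mem_cons] at this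
      rcases this with rfl | h'
      · exact absurd he hin
      · exact h'
/-- Splitting a path at a vertex: the two pieces meet only at the split vertex and
have disjoint edges. -/
lemma path_split {G : SimpleGraph V} [DecidableEq V] {u v a : V} {A : G.Walk u v}
    (hA : A.IsPath) (ha : a ∈ A.support) :
    (∀ w, w ∈ (A.takeUntil a ha).support → w ∈ (A.dropUntil a ha).support → w = a) ∧
    (∀ e ∈ (A.takeUntil a ha).edges, e ∉ (A.dropUntil a ha).edges) := by
  have hspec := A.take_spec ha
  have hsup : A.support = (A.takeUntil a ha).support ++ (A.dropUntil a ha).support.tail := by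
    have := congrArg Walk.support hspec
    rw [Walk.support_append] at this
    exact this.symm
  have hnodup : ((A.takeUntil a ha).support ++ (A.dropUntil a ha).support.tail).Nodup := by
    rw [← hsup]; exact hA.support_nodup
  have hdisj := List.disjoint_of_nodup_append hnodup
  constructor
  · intro w hw1 hw2
    by_contra hne
    exact hdisj hw1 (mem_tail_of_ne hw2 hne)
  · have hedges : A.edges = (A.takeUntil a ha).edges ++ (A.dropUntil a ha).edges := by
      have := congrArg Walk.edges hspec
      rw [Walk.edges_append] at this
      exact this.symm
    have : ((A.takeUntil a ha).edges ++ (A.dropUntil a ha).edges).Nodup := by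
      rw [← hedges]; exact hA.isTrail.edges_nodup
    exact fun e he => List.disjoint_of_nodup_append this he

/-- Splitting a cycle (based at `u`) at another vertex `z`. -/
lemma cycle_split {G : SimpleGraph V} [DecidableEq V] {u z : V} {c : G.Walk u u}
    (hc : c.IsCycle) (hz : z ∈ c.support) (hzu : z ≠ u) :
    (c.takeUntil z hz).IsPath ∧ (c.dropUntil z hz).IsPath ∧
    (∀ w, w ∈ (c.takeUntil z hz).support → w ∈ (c.dropUntil z hz).support →
      w = u ∨ w = z) ∧
    (∀ e ∈ (c.takeUntil z hz).edges, e ∉ (c.dropUntil z hz).edges) := by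
  set D := c.takeUntil z hz with hD
  set E := c.dropUntil z hz with hE
  have hspec := c.take_spec hz
  have hsup : c.support = D.support ++ E.support.tail := by
    have := congrArg Walk.support hspec
    rw [Walk.support_append] at this
    exact this.symm
  have hDcons : D.support = u :: D.support.tail := D.support_eq_cons
  have hccons : c.support = u :: c.support.tail := c.support_eq_cons
  have htails : c.support.tail = D.support.tail ++ E.support.tail := by
    have : u :: c.support.tail = (u :: D.support.tail) ++ E.support.tail := by
      rw [← hccons, ← hDcons, ← hsup]
    rw [List.cons_append] at this
    exact List.cons_injective this
  have htn : c.support.tail.Nodup := hc.2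
  rw [htails] at htn
  have hDn : D.support.tail.Nodup := htn.of_append_left
  have hEn : E.support.tail.Nodup := htn.of_append_right
  have hdisj := List.disjoint_of_nodup_append htn
  have huE : u ∈ E.support.tail := by
    refine mem_tail_of_ne E.end_mem_support (by simpa [hE] using hzu.symm)
  have huD : u ∉ D.support.tail := fun h => hdisj h huE
  have hzD : z ∈ D.support.tail := mem_tail_of_ne D.end_mem_support hzu
  have hzE : z ∉ E.support.tail := fun h => hdisj hzD h
  have hDp : D.IsPath := by
    rw [Walk.isPath_def, hDcons]
    exact List.nodup_cons.mpr ⟨huD, hDn⟩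
  have hEp : E.IsPath := by
    rw [Walk.isPath_def, E.support_eq_cons]
    exact List.nodup_cons.mpr ⟨hzE, hEn⟩
  refine ⟨hDp, hEp, ?_, ?_⟩
  · intro w hw1 hw2
    by_contra hne
    push_neg at hne
    exact hdisj (mem_tail_of_ne hw1 hne.1) (mem_tail_of_ne hw2 hne.2)
  · have hedges : c.edges = D.edges ++ E.edges := by
      rw [← hspec, Walk.edges_append]
    have : (D.edges ++ E.edges).Nodup := by
      rw [← hedges]; exact hc.isCircuit.isTrail.edges_nodup
    exact fun e he => List.disjoint_of_nodup_append this he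

/-- Gluing two paths that meet only at the junction vertex gives a path. -/
lemma append_isPath {G : SimpleGraph V} {a u b : V} {p : G.Walk a u} {q : G.Walk u b}
    (hp : p.IsPath) (hq : q.IsPath)
    (hint : ∀ w ∈ p.support, w ∈ q.support → w = u) : (p.append q).IsPath := by
  rw [Walk.isPath_def, Walk.support_append]
  have hqn : q.support.tail.Nodup := by
    have := hq.support_nodup
    rw [q.support_eq_cons] at this
    exact (List.nodup_cons.mp this).2
  have huq : u ∉ q.support.tail := by
    have := hq.support_nodup
    rw [q.support_eq_cons] at this
    exact (List.nodup_cons.mp this).1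
  refine List.Nodup.append hp.support_nodup hqn ?_
  intro w hw1 hw2
  have hwu : w = u := hint w hw1 (List.mem_of_mem_tail hw2)
  exact huq (hwu ▸ hw2)

/-- The subgraph of a path is a tree. -/
lemma isTree_toSubgraph {G : SimpleGraph V} {a b : V} {p : G.Walk a b} (hp : p.IsPath) :
    p.toSubgraph.coe.IsTree := by
  constructor
  · exact p.toSubgraph_connected.coe
  · intro x c hc
    have hd : (c.map p.toSubgraph.hom).IsCycle := hc.map Subgraph.hom_injective
    refine no_cycle_in_path hp hd ?_
    intro e he
    rw [Walk.edges_map, List.mem_map] at he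
    obtain ⟨e', he', rfl⟩ := he
    have hsub : e' ∈ p.toSubgraph.coe.edgeSet := c.edges_subset_edgeSet he'
    have : Sym2.map (↑) e' ∈ p.toSubgraph.edgeSet := by
      rw [← Subgraph.image_coe_edgeSet_coe]
      exact ⟨e', hsub, rfl⟩
    rwa [Walk.mem_edges_toSubgraph] at this

/-- A pair of paths witnessing two internally disjoint Steiner trees. -/
def GoodPair (G : SimpleGraph V) : Prop :=
  ∃ (x1 x2 x3 a1 b1 a2 b2 : V) (W1 : G.Walk a1 b1) (W2 : G.Walk a2 b2),
    x1 ≠ x2 ∧ x1 ≠ x3 ∧ x2 ≠ x3 ∧ W1.IsPath ∧ W2.IsPath ∧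
    (x1 ∈ W1.support ∧ x2 ∈ W1.support ∧ x3 ∈ W1.support) ∧
    (x1 ∈ W2.support ∧ x2 ∈ W2.support ∧ x3 ∈ W2.support) ∧
    (∀ w ∈ W1.support, w ∈ W2.support → w = x1 ∨ w = x2 ∨ w = x3) ∧
    (∀ e ∈ W1.edges, e ∉ W2.edges)

lemma GoodPair.mono {G G' : SimpleGraph V} (h : G' ≤ G) (hg : GoodPair G') : GoodPair G := by
  obtain ⟨x1, x2, x3, a1, b1, a2, b2, W1, W2, h12, h13, h23, hP1, hP2, hm1, hm2, hint, hedg⟩ := hg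
  have hW1e : ∀ e ∈ W1.edges, e ∈ G.edgeSet := fun e he =>
    (edgeSet_subset_edgeSet.mpr h) (W1.edges_subset_edgeSet he)
  have hW2e : ∀ e ∈ W2.edges, e ∈ G.edgeSet := fun e he =>
    (edgeSet_subset_edgeSet.mpr h) (W2.edges_subset_edgeSet he)
  refine ⟨x1, x2, x3, a1, b1, a2, b2, W1.transfer G hW1e, W2.transfer G hW2e,
    h12, h13, h23, hP1.transfer _, hP2.transfer _, ?_, ?_, ?_, ?_⟩
  · simpa [Walk.support_transfer] using hm1
  · simpa [Walk.support_transfer] using hm2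
  · simpa [Walk.support_transfer] using hint
  · simpa [Walk.edges_transfer] using hedg

/-- From a good pair of paths we obtain two internally disjoint Steiner trees. -/
lemma exists_steiner_pair {G : SimpleGraph V} (h : GoodPair G) :
    ∃ (S : Finset V) (T1 T2 : G.Subgraph), S.card = 3 ∧
      G.IsSteinerTree ↑S T1 ∧ G.IsSteinerTree ↑S T2 ∧
      T1.edgeSet ∩ T2.edgeSet = ∅ ∧ T1.verts ∩ T2.verts = ↑S := by
  classical
  obtain ⟨x1, x2, x3, a1, b1, a2, b2, W1, W2, h12, h13, h23, hP1, hP2,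
    ⟨m11, m12, m13⟩, ⟨m21, m22, m23⟩, hint, hedg⟩ := h
  refine ⟨{x1, x2, x3}, W1.toSubgraph, W2.toSubgraph, ?_, ⟨?_, isTree_toSubgraph hP1⟩,
    ⟨?_, isTree_toSubgraph hP2⟩, ?_, ?_⟩
  · rw [Finset.card_insert_of_notMem (by simp [h12, h13]),
      Finset.card_insert_of_notMem (by simp [h23]), Finset.card_singleton]
  · intro w hw
    simp only [Finset.coe_insert, Set.mem_insert_iff, Finset.coe_singleton,
      Set.mem_singleton_iff] at hw
    rw [Walk.mem_verts_toSubgraph]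
    rcases hw with rfl | rfl | rfl <;> assumption
  · intro w hw
    simp only [Finset.coe_insert, Set.mem_insert_iff, Finset.coe_singleton,
      Set.mem_singleton_iff] at hw
    rw [Walk.mem_verts_toSubgraph]
    rcases hw with rfl | rfl | rfl <;> assumption
  · ext e
    simp only [Set.mem_inter_iff, Walk.mem_edges_toSubgraph, Set.mem_empty_iff_false,
      iff_false, not_and]
    exact fun h1 h2 => hedg e h1 h2
  · ext w
    simp only [Set.mem_inter_iff, Walk.mem_verts_toSubgraph, Finset.coe_insert,
      Set.mem_insert_iff, Finset.coe_singleton, Set.mem_singleton_iff]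
    constructor
    · rintro ⟨hw1, hw2⟩
      exact hint w hw1 hw2
    · rintro (rfl | rfl | rfl) <;> exact ⟨by assumption, by assumption⟩

lemma exists_internal {G : SimpleGraph V} {u v : V} {p : G.Walk u v} (hp : p.IsPath)
    (h2 : 2 ≤ p.length) : ∃ a ∈ p.support, a ≠ u ∧ a ≠ v := by
  cases p with
  | nil => simp at h2
  | @cons _ w _ h q =>
    refine ⟨w, by simp, fun hwu => h.ne hwu.symm, ?_⟩
    rintro rfl
    rw [Walk.cons_isPath_iff] at hp
    have := loop_path_nil hp.1
    simp only [Walk.length_cons] at h2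
    omega

lemma cycle_internal {G : SimpleGraph V} {u : V} {c : G.Walk u u} (hc : c.IsCycle) :
    ∃ a ∈ c.support, a ≠ u := by
  cases c with
  | nil => have := hc.three_le_length; simp at this
  | @cons _ w _ h q => exact ⟨w, by simp, fun hwu => h.ne hwu.symm⟩

lemma theta_aux {G : SimpleGraph V} {u v : V} (huv : u ≠ v)
    {A : G.Walk u v} {B : G.Walk v u} {p : G.Walk u v}
    (hA : A.IsPath) (hB : B.IsPath) (hp : p.IsPath) (hAlen : 2 ≤ A.length)
    (hABi : ∀ w ∈ A.support, w ∈ B.support → w = u ∨ w = v)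
    (hABe : ∀ e ∈ A.edges, e ∉ B.edges)
    (hpAi : ∀ w ∈ p.support, w ∈ A.support → w = u ∨ w = v)
    (hpBi : ∀ w ∈ p.support, w ∈ B.support → w = u ∨ w = v)
    (hpAe : ∀ e ∈ p.edges, e ∉ A.edges)
    (hpBe : ∀ e ∈ p.edges, e ∉ B.edges) : GoodPair G := by
  classical
  obtain ⟨a, haA, hau, hav⟩ := exists_internal hA hAlen
  obtain ⟨hsplit_i, hsplit_e⟩ := path_split hA haA
  have hA1p : (A.takeUntil a haA).IsPath := hA.takeUntil haA
  have hA2p : (A.dropUntil a haA).IsPath := hA.dropUntil haA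
  have hA1sub := A.support_takeUntil_subset haA
  have hA2sub := A.support_dropUntil_subset haA
  have hA1esub := A.edges_takeUntil_subset haA
  have hA2esub := A.edges_dropUntil_subset haA
  have hvA1 : v ∉ (A.takeUntil a haA).support := fun hv' =>
    hav ((hsplit_i v hv' (A.dropUntil a haA).end_mem_support).symm)
  have huA2 : u ∉ (A.dropUntil a haA).support := fun hu' =>
    hau ((hsplit_i u (A.takeUntil a haA).start_mem_support hu').symm)
  have hW1p : ((A.takeUntil a haA).reverse.append p).IsPath := by
    refine append_isPath hA1p.reverse hp ?_
    intro w hw1 hw2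
    rw [Walk.support_reverse, List.mem_reverse] at hw1
    rcases hpAi w hw2 (hA1sub hw1) with rfl | rfl
    · rfl
    · exact absurd hw1 hvA1
  have hW2p : ((A.dropUntil a haA).append B).IsPath := by
    refine append_isPath hA2p hB ?_
    intro w hw1 hw2
    rcases hABi w (hA2sub hw1) hw2 with rfl | rfl
    · exact absurd hw1 huA2
    · rfl
  refine ⟨u, a, v, a, v, a, u, (A.takeUntil a haA).reverse.append p,
    (A.dropUntil a haA).append B, fun h => hau h.symm, huv, hav,
    hW1p, hW2p, ⟨?_, ?_, ?_⟩, ⟨?_, ?_, ?_⟩, ?_, ?_⟩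
  · rw [Walk.mem_support_append_iff]
    left
    rw [Walk.support_reverse, List.mem_reverse]
    exact (A.takeUntil a haA).start_mem_support
  · exact (Walk.start_mem_support _)
  · exact (Walk.end_mem_support _)
  · exact (Walk.end_mem_support _)
  · exact (Walk.start_mem_support _)
  · rw [Walk.mem_support_append_iff]
    left
    exact (A.dropUntil a haA).end_mem_support
  · intro w hw1 hw2
    rw [Walk.mem_support_append_iff] at hw1 hw2
    rw [Walk.support_reverse, List.mem_reverse] at hw1
    rcases hw1 with hw1 | hw1 <;> rcases hw2 with hw2 | hw2
    · exact Or.inr (Or.inl (hsplit_i w hw1 hw2))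
    · rcases hABi w (hA1sub hw1) hw2 with rfl | rfl
      · exact Or.inl rfl
      · exact Or.inr (Or.inr rfl)
    · rcases hpAi w hw1 (hA2sub hw2) with rfl | rfl
      · exact Or.inl rfl
      · exact Or.inr (Or.inr rfl)
    · rcases hpBi w hw1 hw2 with rfl | rfl
      · exact Or.inl rfl
      · exact Or.inr (Or.inr rfl)
  · intro e he1 he2
    rw [Walk.edges_append, List.mem_append] at he1 he2
    rw [Walk.edges_reverse, List.mem_reverse] at he1
    rcases he1 with he1 | he1 <;> rcases he2 with he2 | he2
    · exact hsplit_e e he1 he2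
    · exact hABe e (hA1esub he1) he2
    · exact hpAe e he1 (hA2esub he2)
    · exact hpBe e he1 he2

lemma goodPair_of_two_cycles {G : SimpleGraph V} {u : V} {c1 c2 : G.Walk u u}
    (h1 : c1.IsCycle) (h2 : c2.IsCycle)
    (hint : ∀ w ∈ c1.support, w ∈ c2.support → w = u)
    (hedge : ∀ e ∈ c1.edges, e ∉ c2.edges) : GoodPair G := by
  classical
  obtain ⟨a, hac, hau⟩ := cycle_internal h1
  obtain ⟨b, hbc, hbu⟩ := cycle_internal h2
  have hab : a ≠ b := fun h => hau (hint a hac (h ▸ hbc))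
  obtain ⟨hD1p, hE1p, hi1, he1⟩ := cycle_split h1 hac hau
  obtain ⟨hD2p, hE2p, hi2, he2⟩ := cycle_split h2 hbc hbu
  have hD1sub := c1.support_takeUntil_subset hac
  have hE1sub := c1.support_dropUntil_subset hac
  have hD2sub := c2.support_takeUntil_subset hbc
  have hE2sub := c2.support_dropUntil_subset hbc
  have hD1esub := c1.edges_takeUntil_subset hac
  have hE1esub := c1.edges_dropUntil_subset hac
  have hD2esub := c2.edges_takeUntil_subset hbc
  have hE2esub := c2.edges_dropUntil_subset hbc
  have hW1p : ((c1.takeUntil a hac).reverse.append (c2.takeUntil b hbc)).IsPath := by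
    refine append_isPath hD1p.reverse hD2p ?_
    intro w hw1 hw2
    rw [Walk.support_reverse, List.mem_reverse] at hw1
    exact hint w (hD1sub hw1) (hD2sub hw2)
  have hW2p : ((c1.dropUntil a hac).append (c2.dropUntil b hbc).reverse).IsPath := by
    refine append_isPath hE1p hE2p.reverse ?_
    intro w hw1 hw2
    rw [Walk.support_reverse, List.mem_reverse] at hw2
    exact hint w (hE1sub hw1) (hE2sub hw2)
  refine ⟨a, u, b, a, b, a, b, (c1.takeUntil a hac).reverse.append (c2.takeUntil b hbc),
    (c1.dropUntil a hac).append (c2.dropUntil b hbc).reverse,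
    hau, hab, fun h => hbu h.symm, hW1p, hW2p, ⟨?_, ?_, ?_⟩, ⟨?_, ?_, ?_⟩, ?_, ?_⟩
  · exact (Walk.start_mem_support _)
  · rw [Walk.mem_support_append_iff]
    left
    rw [Walk.support_reverse, List.mem_reverse]
    exact (c1.takeUntil a hac).start_mem_support
  · exact (Walk.end_mem_support _)
  · exact (Walk.start_mem_support _)
  · rw [Walk.mem_support_append_iff]
    left
    exact (c1.dropUntil a hac).end_mem_support
  · exact (Walk.end_mem_support _)
  · intro w hw1 hw2
    rw [Walk.mem_support_append_iff] at hw1 hw2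
    rw [Walk.support_reverse, List.mem_reverse] at hw1
    rw [Walk.support_reverse, List.mem_reverse] at hw2
    rcases hw1 with hw1 | hw1 <;> rcases hw2 with hw2 | hw2
    · rcases hi1 w hw1 hw2 with rfl | rfl
      · exact Or.inr (Or.inl rfl)
      · exact Or.inl rfl
    · exact Or.inr (Or.inl (hint w (hD1sub hw1) (hE2sub hw2)))
    · exact Or.inr (Or.inl (hint w (hE1sub hw2) (hD2sub hw1)))
    · rcases hi2 w hw1 hw2 with rfl | rfl
      · exact Or.inr (Or.inl rfl)
      · exact Or.inr (Or.inr rfl)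
  · intro e he1' he2'
    rw [Walk.edges_append, List.mem_append] at he1' he2'
    rw [Walk.edges_reverse, List.mem_reverse] at he1'
    rw [Walk.edges_reverse, List.mem_reverse] at he2'
    rcases he1' with ha' | ha' <;> rcases he2' with hb' | hb'
    · exact he1 e ha' hb'
    · exact hedge e (hD1esub ha') (hE2esub hb')
    · exact hedge e (hE1esub hb') (hD2esub ha')
    · exact he2 e ha' hb'

lemma basept_mem_support_tail {G : SimpleGraph V} {x : V} {c : G.Walk x x} (hnn : ¬ c.Nil) :
    x ∈ c.support.tail := by
  cases c with
  | nil => exact absurd Walk.Nil.nil hnn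
  | cons h q => simpa using q.end_mem_support

lemma mem_support_rotate_iff {G : SimpleGraph V} [DecidableEq V] {x u : V} {c : G.Walk x x}
    (hnn : ¬ c.Nil) (hu : u ∈ c.support) {w : V} :
    w ∈ (c.rotate u hu).support ↔ w ∈ c.support := by
  have hrt := (Walk.support_rotate c u hu).mem_iff (a := w)
  have hx : x ∈ c.support.tail := basept_mem_support_tail hnn
  have hcons := c.support_eq_cons
  have hcons' := (c.rotate u hu).support_eq_cons
  constructor
  · intro h
    rw [hcons', List.mem_cons] at h
    rcases h with rfl | h'
    · exact hu
    · exact List.mem_of_mem_tail (hrt.mp h')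
  · intro h
    rw [hcons', List.mem_cons]
    rcases eq_or_ne w u with rfl | hne
    · exact Or.inl rfl
    · right
      refine hrt.mpr ?_
      rcases eq_or_ne w x with rfl | hne'
      · exact hx
      · exact mem_tail_of_ne h hne'

lemma length_rotate {G : SimpleGraph V} [DecidableEq V] {x u : V} (c : G.Walk x x)
    (hu : u ∈ c.support) : (c.rotate u hu).length = c.length := by
  have h1 := congrArg Walk.length (c.take_spec hu)
  rw [Walk.length_append] at h1
  rw [Walk.rotate, Walk.length_append]
  omega

/-- A cycle together with an "ear" path between two distinct cycle vertices gives a good pair. -/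
lemma theta {G : SimpleGraph V} {x u v : V} {c : G.Walk x x} (hc : c.IsCycle)
    (hu : u ∈ c.support) (hv : v ∈ c.support) (huv : u ≠ v) {p : G.Walk u v}
    (hp : p.IsPath) (hpe : ∀ e ∈ p.edges, e ∉ c.edges)
    (hps : ∀ w ∈ p.support, w ∈ c.support → w = u ∨ w = v) : GoodPair G := by
  classical
  have hnn : ¬ c.Nil := by
    rw [Walk.nil_iff_length_eq]
    have := hc.three_le_length
    omega
  have hc' : (c.rotate u hu).IsCycle := hc.rotate hu
  have hmemiff : ∀ w : V, w ∈ (c.rotate u hu).support ↔ w ∈ c.support := fun w =>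
    mem_support_rotate_iff hnn hu
  have hedgeiff : ∀ e, e ∈ (c.rotate u hu).edges ↔ e ∈ c.edges := fun e =>
    (Walk.rotate_edges c u hu).mem_iff
  have hv' : v ∈ (c.rotate u hu).support := (hmemiff v).mpr hv
  obtain ⟨hAp, hBp, hi, he⟩ := cycle_split hc' hv' huv.symm
  have hlen : ((c.rotate u hu).takeUntil v hv').length +
      ((c.rotate u hu).dropUntil v hv').length = (c.rotate u hu).length := by
    have h1 := congrArg Walk.length ((c.rotate u hu).take_spec hv')
    rw [Walk.length_append] at h1
    exact h1
  have hlr := length_rotate c hu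
  have h3 := hc.three_le_length
  have hA1 : 1 ≤ ((c.rotate u hu).takeUntil v hv').length := by
    rcases Nat.eq_zero_or_pos ((c.rotate u hu).takeUntil v hv').length with h0 | h
    · exact absurd (Walk.eq_of_length_eq_zero h0) huv
    · exact h
  have hB1 : 1 ≤ ((c.rotate u hu).dropUntil v hv').length := by
    rcases Nat.eq_zero_or_pos ((c.rotate u hu).dropUntil v hv').length with h0 | h
    · exact absurd (Walk.eq_of_length_eq_zero h0).symm huv
    · exact h
  have hAsub : ∀ w ∈ ((c.rotate u hu).takeUntil v hv').support, w ∈ c.support := fun w hw =>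
    (hmemiff w).mp ((c.rotate u hu).support_takeUntil_subset hv' hw)
  have hBsub : ∀ w ∈ ((c.rotate u hu).dropUntil v hv').support, w ∈ c.support := fun w hw =>
    (hmemiff w).mp ((c.rotate u hu).support_dropUntil_subset hv' hw)
  have hAesub : ∀ e ∈ ((c.rotate u hu).takeUntil v hv').edges, e ∈ c.edges := fun e hw =>
    (hedgeiff e).mp ((c.rotate u hu).edges_takeUntil_subset hv' hw)
  have hBesub : ∀ e ∈ ((c.rotate u hu).dropUntil v hv').edges, e ∈ c.edges := fun e hw =>
    (hedgeiff e).mp ((c.rotate u hu).edges_dropUntil_subset hv' hw)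
  rcases le_or_gt 2 ((c.rotate u hu).takeUntil v hv').length with hA2 | hA2
  · refine theta_aux huv hAp hBp hp hA2 hi he ?_ ?_ ?_ ?_
    · exact fun w hw hwA => hps w hw (hAsub w hwA)
    · exact fun w hw hwB => hps w hw (hBsub w hwB)
    · exact fun e he' heA => hpe e he' (hAesub e heA)
    · exact fun e he' heB => hpe e he' (hBesub e heB)
  · have hB2 : 2 ≤ ((c.rotate u hu).dropUntil v hv').length := by omega
    refine theta_aux huv.symm hBp hAp hp.reverse hB2 ?_ ?_ ?_ ?_ ?_ ?_
    · exact fun w hw1 hw2 => (hi w hw2 hw1).symm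
    · exact fun e h1 h2 => he e h2 h1
    · intro w hw hwB
      rw [Walk.support_reverse, List.mem_reverse] at hw
      exact (hps w hw (hBsub w hwB)).symm
    · intro w hw hwA
      rw [Walk.support_reverse, List.mem_reverse] at hw
      exact (hps w hw (hAsub w hwA)).symm
    · intro e he' heB
      rw [Walk.edges_reverse, List.mem_reverse] at he'
      exact hpe e he' (hBesub e heB)
    · intro e he' heA
      rw [Walk.edges_reverse, List.mem_reverse] at he'
      exact hpe e he' (hAesub e heA)

lemma goodPair_of_connection_aux {G : SimpleGraph V} {x : V} {c : G.Walk x x} (hc : c.IsCycle) :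
    ∀ n : ℕ, ∀ u v : V, ∀ p : (G.deleteEdges {e | e ∈ c.edges}).Walk u v,
      p.length ≤ n → u ∈ c.support → v ∈ c.support → u ≠ v → GoodPair G := by
  classical
  intro n
  induction n with
  | zero =>
    intro u v p hl hu hv huv
    exact absurd (Walk.eq_of_length_eq_zero (Nat.le_zero.mp hl)) huv
  | succ n IH =>
    intro u v p hl hu hv huv
    by_cases hz : ∃ z, z ∈ p.bypass.support ∧ z ∈ c.support ∧ z ≠ u ∧ z ≠ v
    · obtain ⟨z, hzp, hzc, hzu, hzv⟩ := hz
      have hble := p.length_bypass_le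
      have hlt : (p.bypass.takeUntil z hzp).length < p.bypass.length := by
        have h1 := congrArg Walk.length (p.bypass.take_spec hzp)
        rw [Walk.length_append] at h1
        have h0 : (p.bypass.dropUntil z hzp).length ≠ 0 := fun h0 =>
          hzv (Walk.eq_of_length_eq_zero h0)
        omega
      exact IH u z (p.bypass.takeUntil z hzp) (by omega) hu hzc (fun h => hzu h.symm)
    · push_neg at hz
      have hbp : p.bypass.IsPath := p.bypass_isPath
      have hesub : ∀ e ∈ p.bypass.edges, e ∈ G.edgeSet ∧ e ∉ c.edges := by
        intro e he
        have := p.bypass.edges_subset_edgeSet he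
        rwa [edgeSet_deleteEdges, Set.mem_diff] at this
      refine theta hc hu hv huv
        (p := p.bypass.transfer G (fun e he => (hesub e he).1)) (hbp.transfer _) ?_ ?_
      · intro e he
        rw [Walk.edges_transfer] at he
        exact (hesub e he).2
      · intro w hw hwc
        rw [Walk.support_transfer] at hw
        rcases eq_or_ne w u with rfl | hne
        · exact Or.inl rfl
        · exact Or.inr (hz w hw hwc hne)

lemma goodPair_of_connection {G : SimpleGraph V} {x : V} {c : G.Walk x x} (hc : c.IsCycle)
    {u v : V} (p : (G.deleteEdges {e | e ∈ c.edges}).Walk u v)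
    (hu : u ∈ c.support) (hv : v ∈ c.support) (huv : u ≠ v) : GoodPair G :=
  goodPair_of_connection_aux hc p.length u v p le_rfl hu hv huv

lemma goodPair_of_cycle' {G : SimpleGraph V} {x v : V} {c : G.Walk x x} (hc : c.IsCycle)
    (hv : v ∈ c.support) (d : (G.deleteEdges {e | e ∈ c.edges}).Walk v v)
    (hd : d.IsCycle) : GoodPair G := by
  classical
  by_cases hw : ∃ w, w ∈ d.support ∧ w ∈ c.support ∧ w ≠ v
  · obtain ⟨w, hwd, hwc, hwv⟩ := hw
    exact goodPair_of_connection hc (d.takeUntil w hwd) hv hwc (fun h => hwv h.symm)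
  · push_neg at hw
    have hnn : ¬ c.Nil := by
      rw [Walk.nil_iff_length_eq]
      have := hc.three_le_length
      omega
    have hesub : ∀ e ∈ d.edges, e ∈ G.edgeSet ∧ e ∉ c.edges := by
      intro e he
      have := d.edges_subset_edgeSet he
      rwa [edgeSet_deleteEdges, Set.mem_diff] at this
    refine goodPair_of_two_cycles (hc.rotate hv) (hd.transfer (fun e he => (hesub e he).1)) ?_ ?_
    · intro w hw1 hw2
      rw [Walk.support_transfer] at hw2
      exact hw w hw2 ((mem_support_rotate_iff hnn hv).mp hw1)
    · intro e he1 he2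
      rw [Walk.edges_transfer] at he2
      exact (hesub e he2).2 ((Walk.rotate_edges c v hv).mem_iff.mp he1)

lemma card_cc_le_card [Fintype V] (G : SimpleGraph V) :
    Nat.card G.ConnectedComponent ≤ Fintype.card V := by
  have hsurj : Function.Surjective G.connectedComponentMk := fun C =>
    C.ind (fun v => ⟨v, rfl⟩)
  calc Nat.card G.ConnectedComponent ≤ Nat.card V :=
        Nat.card_le_card_of_surjective _ hsurj
    _ = Fintype.card V := Nat.card_eq_fintype_card

lemma comp_lower_bound [Fintype V] {G G' : SimpleGraph V} (h : G' ≤ G) (W : Finset V)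
    (hr : ∀ a ∈ W, ∀ b ∈ W, G.Reachable a b)
    (hnr : ∀ a ∈ W, ∀ b ∈ W, a ≠ b → ¬ G'.Reachable a b) :
    Nat.card G.ConnectedComponent + W.card ≤ Nat.card G'.ConnectedComponent + 1 := by
  classical
  have hsurj : Function.Surjective (ConnectedComponent.map (Hom.ofLE h)) := fun C =>
    C.ind (fun v => ⟨G'.connectedComponentMk v, rfl⟩)
  rcases W.eq_empty_or_nonempty with rfl | ⟨w₀, hw₀⟩
  · simp only [Finset.card_empty, add_zero]
    have := Nat.card_le_card_of_surjective _ hsurj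
    omega
  · haveI : Fintype G.ConnectedComponent := Fintype.ofFinite _
    haveI : Fintype G'.ConnectedComponent := Fintype.ofFinite _
    rw [Nat.card_eq_fintype_card, Nat.card_eq_fintype_card]
    set φ : G'.ConnectedComponent → G.ConnectedComponent :=
      ConnectedComponent.map (Hom.ofLE h) with hφ
    set b₀ := G.connectedComponentMk w₀ with hb₀
    have hcount : Fintype.card G'.ConnectedComponent =
        ∑ b : G.ConnectedComponent, (Finset.univ.filter fun K => φ K = b).card := by
      rw [← Finset.card_univ,
        Finset.card_eq_sum_card_fiberwise (f := φ) (fun K _ => Finset.mem_univ (φ K))]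
    have h1 : ∀ b : G.ConnectedComponent, 1 ≤ (Finset.univ.filter fun K => φ K = b).card := by
      intro b
      obtain ⟨K, hK⟩ := hsurj b
      exact Finset.card_pos.mpr ⟨K, Finset.mem_filter.mpr ⟨Finset.mem_univ _, hK⟩⟩
    have h2 : W.card ≤ (Finset.univ.filter fun K => φ K = b₀).card := by
      refine Finset.card_le_card_of_injOn (fun w => G'.connectedComponentMk w) ?_ ?_
      · intro w hw
        refine Finset.mem_filter.mpr ⟨Finset.mem_univ _, ?_⟩
        show G.connectedComponentMk w = b₀
        exact ConnectedComponent.eq.mpr (hr w hw w₀ hw₀)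
      · intro w1 hw1 w2 hw2 heq
        by_contra hne
        exact hnr w1 (by simpa using hw1) w2 (by simpa using hw2) hne
          (ConnectedComponent.eq.mp heq)
    have hsum : ∑ b : G.ConnectedComponent, (Finset.univ.filter fun K => φ K = b).card =
        (Finset.univ.filter fun K => φ K = b₀).card +
          ∑ b ∈ Finset.univ.erase b₀, (Finset.univ.filter fun K => φ K = b).card :=
      (Finset.add_sum_erase _ _ (Finset.mem_univ b₀)).symm
    have h3 : Fintype.card G.ConnectedComponent - 1 ≤
        ∑ b ∈ Finset.univ.erase b₀, (Finset.univ.filter fun K => φ K = b).card := by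
      calc Fintype.card G.ConnectedComponent - 1
          = (Finset.univ.erase b₀).card := by
            rw [Finset.card_erase_of_mem (Finset.mem_univ _), Finset.card_univ]
        _ = (Finset.univ.erase b₀).card • 1 := by simp
        _ ≤ _ := Finset.card_nsmul_le_sum _ _ _ (fun b _ => h1 b)
    have hcardpos : 1 ≤ Fintype.card G.ConnectedComponent := Fintype.card_pos_iff.mpr ⟨b₀⟩
    omega

/-- Vertices lying on some cycle. -/
def cycVerts (G : SimpleGraph V) : Set V := {v | ∃ d : G.Walk v v, d.IsCycle}

lemma cycVerts_mono {G G' : SimpleGraph V} (h : G' ≤ G) : cycVerts G' ⊆ cycVerts G := by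
  rintro v ⟨d, hd⟩
  have hsub : ∀ e ∈ d.edges, e ∈ G.edgeSet := fun e he =>
    (edgeSet_subset_edgeSet.mpr h) (d.edges_subset_edgeSet he)
  exact ⟨d.transfer G hsub, hd.transfer _⟩

lemma cycle_support_toFinset_card [DecidableEq V] {G : SimpleGraph V} {x : V}
    {c : G.Walk x x} (hc : c.IsCycle) : c.support.toFinset.card = c.length := by
  have hnn : ¬ c.Nil := by
    rw [Walk.nil_iff_length_eq]
    have := hc.three_le_length
    omega
  have hx : x ∈ c.support.tail := basept_mem_support_tail hnn
  have h1 : c.support.toFinset = c.support.tail.toFinset := by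
    conv_lhs => rw [c.support_eq_cons]
    rw [List.toFinset_cons]
    exact Finset.insert_eq_self.mpr (List.mem_toFinset.mpr hx)
  rw [h1, List.toFinset_card_of_nodup hc.2, List.length_tail, c.length_support]
  omega

lemma cycle_edges_toFinset_card [DecidableEq V] {G : SimpleGraph V} {x : V}
    {c : G.Walk x x} (hc : c.IsCycle) : c.edges.toFinset.card = c.length := by
  rw [List.toFinset_card_of_nodup hc.isCircuit.isTrail.edges_nodup, c.length_edges]

lemma main_bound [Fintype V] :
    ∀ (N : ℕ) (G : SimpleGraph V), G.edgeSet.ncard = N → ¬ GoodPair G →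
    G.edgeSet.ncard ≤
      (Fintype.card V - Nat.card G.ConnectedComponent) + (cycVerts G).ncard / 3 := by
  classical
  intro N
  induction N using Nat.strong_induction_on with
  | _ N IH =>
  intro G hN hGP
  by_cases hcyc : ∃ (x : V) (c : G.Walk x x), c.IsCycle
  · obtain ⟨x, c, hc⟩ := hcyc
    set G' := G.deleteEdges {e | e ∈ c.edges} with hG'
    have hle : G' ≤ G := G.deleteEdges_le _
    have hGP' : ¬ GoodPair G' := fun hg => hGP (hg.mono hle)
    have hE' : G'.edgeSet = G.edgeSet \ {e | e ∈ c.edges} := G.edgeSet_deleteEdges _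
    have hsubE : {e : Sym2 V | e ∈ c.edges} ⊆ G.edgeSet := fun e he =>
      c.edges_subset_edgeSet he
    have hsetcard : ({e : Sym2 V | e ∈ c.edges}).ncard = c.length := by
      have h : {e : Sym2 V | e ∈ c.edges} = ↑c.edges.toFinset := by ext e; simp
      rw [h, Set.ncard_coe_finset, cycle_edges_toFinset_card hc]
    have hecard : G'.edgeSet.ncard = G.edgeSet.ncard - c.length := by
      rw [hE', Set.ncard_diff hsubE, hsetcard]
    have helower : c.length ≤ G.edgeSet.ncard := by
      rw [← hsetcard]
      exact Set.ncard_le_ncard hsubE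
    have h3 := hc.three_le_length
    have hnoreach : ∀ a ∈ c.support, ∀ b ∈ c.support, a ≠ b → ¬ G'.Reachable a b := by
      intro a ha b hb hab hr
      obtain ⟨p⟩ := hr
      exact hGP (goodPair_of_connection hc p ha hb hab)
    have hnocyc : ∀ v ∈ c.support, v ∉ cycVerts G' := by
      rintro v hv ⟨d, hd⟩
      exact hGP (goodPair_of_cycle' hc hv d hd)
    have hW : ∀ a ∈ c.support.toFinset, ∀ b ∈ c.support.toFinset, G.Reachable a b := by
      intro a ha b hb
      rw [List.mem_toFinset] at ha hb
      have r1 : G.Reachable x a := ⟨c.takeUntil a ha⟩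
      have r2 : G.Reachable x b := ⟨c.takeUntil b hb⟩
      exact r1.symm.trans r2
    have hW' : ∀ a ∈ c.support.toFinset, ∀ b ∈ c.support.toFinset, a ≠ b →
        ¬ G'.Reachable a b := by
      intro a ha b hb
      rw [List.mem_toFinset] at ha hb
      exact hnoreach a ha b hb
    have hcomp := comp_lower_bound hle c.support.toFinset hW hW'
    rw [cycle_support_toFinset_card hc] at hcomp
    have hcvsub : {v : V | v ∈ c.support} ⊆ cycVerts G := fun v hv =>
      ⟨c.rotate v hv, hc.rotate hv⟩
    have hcv' : cycVerts G' ⊆ cycVerts G \ {v | v ∈ c.support} := fun v hv =>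
      ⟨cycVerts_mono hle hv, fun hvc => hnocyc v hvc hv⟩
    have hcvcard : {v : V | v ∈ c.support}.ncard = c.length := by
      have h : {v : V | v ∈ c.support} = ↑c.support.toFinset := by ext v; simp
      rw [h, Set.ncard_coe_finset, cycle_support_toFinset_card hc]
    have hm' : (cycVerts G').ncard ≤ (cycVerts G).ncard - c.length := by
      calc (cycVerts G').ncard ≤ (cycVerts G \ {v | v ∈ c.support}).ncard :=
            Set.ncard_le_ncard hcv'
        _ = (cycVerts G).ncard - c.length := by rw [Set.ncard_diff hcvsub, hcvcard]
    have hmge : c.length ≤ (cycVerts G).ncard := by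
      rw [← hcvcard]
      exact Set.ncard_le_ncard hcvsub
    have hNlt : G'.edgeSet.ncard < N := by omega
    have hIH := IH _ hNlt G' rfl hGP'
    have hk' := card_cc_le_card G'
    have hk := card_cc_le_card G
    omega
  · push_neg at hcyc
    have hcv : cycVerts G = ∅ :=
      Set.eq_empty_iff_forall_notMem.mpr (fun v ⟨d, hd⟩ => hcyc v d hd)
    rcases Set.eq_empty_or_nonempty G.edgeSet with hE | hne
    · rw [hE]
      simp
    · obtain ⟨e₀, he₀⟩ := hne
      induction e₀ using Sym2.ind with
      | _ a b =>
      have hadj : G.Adj a b := G.mem_edgeSet.mp he₀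
      set G' := G.deleteEdges {s(a, b)} with hG'
      have hle : G' ≤ G := G.deleteEdges_le _
      have hGP' : ¬ GoodPair G' := fun hg => hGP (hg.mono hle)
      have hE' : G'.edgeSet = G.edgeSet \ {s(a, b)} := G.edgeSet_deleteEdges _
      have hecard : G'.edgeSet.ncard = G.edgeSet.ncard - 1 := by
        rw [hE']
        exact Set.ncard_diff_singleton_of_mem he₀
      have hpos : 0 < G.edgeSet.ncard := (Set.ncard_pos).mpr ⟨_, he₀⟩
      have hnr : ¬ G'.Reachable a b := by
        rintro ⟨p⟩
        have hbp := p.bypass_isPath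
        have hesub : ∀ e ∈ p.bypass.edges, e ∈ G.edgeSet ∧ e ≠ s(a, b) := by
          intro e he
          have := p.bypass.edges_subset_edgeSet he
          rw [hE', Set.mem_diff, Set.mem_singleton_iff] at this
          exact this
        have hcycle : (Walk.cons hadj
            (p.bypass.transfer G (fun e he => (hesub e he).1)).reverse).IsCycle := by
          rw [Walk.cons_isCycle_iff]
          refine ⟨(hbp.transfer _).reverse, ?_⟩
          rw [Walk.edges_reverse, List.mem_reverse, Walk.edges_transfer]
          intro hmem
          exact (hesub _ hmem).2 rfl
        exact hcyc a _ hcycle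
      have hab : a ≠ b := hadj.ne
      have hcomp := comp_lower_bound hle ({a, b} : Finset V) ?_ ?_
      rotate_left
      · intro x hx y hy
        simp only [Finset.mem_insert, Finset.mem_singleton] at hx hy
        rcases hx with rfl | rfl <;> rcases hy with rfl | rfl
        · exact Reachable.refl _
        · exact hadj.reachable
        · exact hadj.symm.reachable
        · exact Reachable.refl _
      · intro x hx y hy hxy
        simp only [Finset.mem_insert, Finset.mem_singleton] at hx hy
        rcases hx with rfl | rfl <;> rcases hy with rfl | rfl
        · exact absurd rfl hxy
        · exact hnr
        · exact fun h => hnr h.symm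
        · exact absurd rfl hxy
      rw [Finset.card_insert_of_notMem (by simpa using hab), Finset.card_singleton] at hcomp
      have hNlt : G'.edgeSet.ncard < N := by omega
      have hIH := IH _ hNlt G' rfl hGP'
      have hm0 : (cycVerts G').ncard = 0 := by
        have : cycVerts G' = ∅ := Set.subset_eq_empty (hcv ▸ cycVerts_mono hle) rfl
        simp [this]
      have hk' := card_cc_le_card G'
      rw [hcv] at *
      simp only [Set.ncard_empty] at *
      omega

lemma zero_mem_steiner {G : SimpleGraph V} {S : Set V} :
    0 ∈ {n : ℕ | ∃ f : Fin n → G.Subgraph,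
      (∀ i, G.IsSteinerTree S (f i)) ∧
      ∀ i j, i ≠ j →
        (f i).edgeSet ∩ (f j).edgeSet = ∅ ∧ (f i).verts ∩ (f j).verts = S} :=
  ⟨fun i => i.elim0, fun i => i.elim0, fun i => i.elim0⟩

lemma steinerConn_mem_bdd [Fintype V] {G : SimpleGraph V} {S : Set V} {a b : V}
    (ha : a ∈ S) (hb : b ∈ S) (hab : a ≠ b) :
    ∀ n ∈ {n : ℕ | ∃ f : Fin n → G.Subgraph,
      (∀ i, G.IsSteinerTree S (f i)) ∧
      ∀ i j, i ≠ j →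
        (f i).edgeSet ∩ (f j).edgeSet = ∅ ∧ (f i).verts ∩ (f j).verts = S},
      n ≤ Fintype.card (Sym2 V) + 1 := by
  rintro n ⟨f, hf, hdis⟩
  rcases le_or_gt n 1 with h1 | h1
  · omega
  · have hedge : ∀ i : Fin n, ∃ e, e ∈ (f i).edgeSet := by
      intro i
      obtain ⟨hsub, htree⟩ := hf i
      have hav : a ∈ (f i).verts := hsub ha
      have hbv : b ∈ (f i).verts := hsub hb
      have hre := htree.isConnected.preconnected ⟨a, hav⟩ ⟨b, hbv⟩
      obtain ⟨w⟩ := hre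
      have hne : (⟨a, hav⟩ : (f i).verts) ≠ ⟨b, hbv⟩ := fun h =>
        hab (congrArg Subtype.val h)
      have hnn : ¬ w.Nil := Walk.not_nil_of_ne hne
      obtain ⟨y, hadj', q, rfl⟩ := Walk.not_nil_iff.mp hnn
      exact ⟨s(a, (y : V)), hadj'⟩
    choose g hg using hedge
    have hinj : Function.Injective g := by
      intro i j hij
      by_contra hne
      have hdint := (hdis i j hne).1
      have hmem : g i ∈ (f i).edgeSet ∩ (f j).edgeSet := ⟨hg i, hij ▸ hg j⟩
      rw [hdint] at hmem
      exact hmem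
    have hcard := Fintype.card_le_of_injective g hinj
    rw [Fintype.card_fin] at hcard
    omega

lemma two_le_kappaBar [Fintype V] {G : SimpleGraph V} (hg : GoodPair G) :
    2 ≤ G.kappaBar 3 := by
  classical
  obtain ⟨S, T1, T2, hS3, hT1, hT2, hE, hV⟩ := exists_steiner_pair hg
  obtain ⟨a, ha, b, hb, hab⟩ := Finset.one_lt_card.mp (by rw [hS3]; norm_num)
  have ha' : a ∈ (↑S : Set V) := ha
  have hb' : b ∈ (↑S : Set V) := hb
  have h2mem : 2 ∈ {n : ℕ | ∃ f : Fin n → G.Subgraph,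
      (∀ i, G.IsSteinerTree (↑S) (f i)) ∧
      ∀ i j, i ≠ j →
        (f i).edgeSet ∩ (f j).edgeSet = ∅ ∧ (f i).verts ∩ (f j).verts = (↑S : Set V)} := by
    refine ⟨![T1, T2], ?_, ?_⟩
    · intro i
      fin_cases i
      · exact hT1
      · exact hT2
    · intro i j hij
      fin_cases i <;> fin_cases j
      · exact absurd rfl hij
      · exact ⟨hE, hV⟩
      · exact ⟨by rw [Set.inter_comm]; exact hE, by rw [Set.inter_comm]; exact hV⟩
      · exact absurd rfl hij
  have hconn2 : 2 ≤ G.steinerConn ↑S := by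
    unfold SimpleGraph.steinerConn
    exact le_csSup ⟨Fintype.card (Sym2 V) + 1,
      fun n hn => steinerConn_mem_bdd ha' hb' hab n hn⟩ h2mem
  have hval : ∀ S' : Finset V, S'.card = 3 →
      G.steinerConn ↑S' ≤ Fintype.card (Sym2 V) + 1 := by
    intro S' hS'3
    obtain ⟨a', ha'', b', hb'', hab'⟩ := Finset.one_lt_card.mp (by rw [hS'3]; norm_num)
    unfold SimpleGraph.steinerConn
    exact csSup_le ⟨0, zero_mem_steiner⟩
      (steinerConn_mem_bdd (Finset.mem_coe.mpr ha'') (Finset.mem_coe.mpr hb'') hab')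
  have hbdd : BddAbove {m : ℕ | ∃ S' : Finset V, S'.card = 3 ∧ G.steinerConn ↑S' = m} := by
    refine ⟨Fintype.card (Sym2 V) + 1, ?_⟩
    rintro m ⟨S', hS'3, rfl⟩
    exact hval S' hS'3
  calc 2 ≤ G.steinerConn ↑S := hconn2
    _ ≤ G.kappaBar 3 := by
        unfold SimpleGraph.kappaBar
        exact le_csSup hbdd ⟨S, hS3, rfl⟩

lemma conn_card_one [Fintype V] {G : SimpleGraph V} (hG : G.Connected) :
    Nat.card G.ConnectedComponent = 1 := by
  haveI : Subsingleton G.ConnectedComponent := by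
    constructor
    intro C D
    obtain ⟨v, rfl⟩ := C.exists_rep
    obtain ⟨w, rfl⟩ := D.exists_rep
    exact ConnectedComponent.eq.mpr (hG.preconnected v w)
  haveI : Nonempty G.ConnectedComponent := by
    obtain ⟨v⟩ := hG.nonempty
    exact ⟨G.connectedComponentMk v⟩
  rw [Nat.card_eq_one_iff_unique]
  exact ⟨inferInstance, inferInstance⟩

end StmtAux

/-- If `n = 3r + q` with `r ≥ 1`, `0 ≤ q ≤ 2`, and `G` is a connected graph on
`n` vertices with `κ̄₃(G) = 1`, then `e(G) ≤ (4n - 3 - q)/3`. -/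
theorem stmt_3 {V : Type*} [Fintype V] (G : SimpleGraph V) (r q : ℕ) (hr : 1 ≤ r)
    (hq : q ≤ 2) (hcard : Fintype.card V = 3 * r + q) (hG : G.Connected)
    (hk : G.kappaBar 3 = 1) :
    G.edgeSet.ncard ≤ (4 * Fintype.card V - 3 - q) / 3 := by
  classical
  have hGP : ¬ StmtAux.GoodPair G := by
    intro hg
    have := StmtAux.two_le_kappaBar hg
    omega
  have hmain := StmtAux.main_bound (G.edgeSet.ncard) G rfl hGP
  have hconn1 : Nat.card G.ConnectedComponent = 1 := StmtAux.conn_card_one hG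
  have hcvle : (StmtAux.cycVerts G).ncard ≤ Fintype.card V := by
    calc (StmtAux.cycVerts G).ncard ≤ (Set.univ : Set V).ncard :=
          Set.ncard_le_ncard (Set.subset_univ _)
      _ = Fintype.card V := by rw [Set.ncard_univ, Nat.card_eq_fintype_card]
  rw [hconn1] at hmain
  omega
end

section
/- Let G be a connected graph with κ̄₃(G) = 1 that has no cut edge. Then G is a cycle. -/
open SimpleGraph

section Aux

open SimpleGraph Walk
set_option linter.unusedSectionVars false
set_option maxHeartbeats 1000000

variable {V : Type*} [DecidableEq V] {G : SimpleGraph V}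

/-- Both endpoints of an edge of a walk lie on its support. -/
lemma SteinerAux.vert_mem_support {a b : V} {w : G.Walk a b} {e : Sym2 V}
    (he : e ∈ w.edges) {y : V} (hy : y ∈ e) : y ∈ w.support := by
  induction e using Sym2.ind with
  | _ s t =>
    rcases Sym2.mem_iff.mp hy with rfl | rfl
    · exact w.fst_mem_support_of_mem_edges he
    · exact w.snd_mem_support_of_mem_edges he

/-- In a cycle, the base vertex is incident to two distinct edges of the cycle. -/
lemma SteinerAux.cyc2 {u : V} (d : G.Walk u u) (hd : d.IsCycle) :
    ∃ e₁ e₂ : Sym2 V, e₁ ≠ e₂ ∧ e₁ ∈ d.edges ∧ e₂ ∈ d.edges ∧ u ∈ e₁ ∧ u ∈ e₂ := by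
  cases d with
  | nil => exact absurd rfl hd.ne_nil
  | cons h t =>
    rename_i b
    have hbu : u ≠ b := G.ne_of_adj h
    obtain ⟨z, hz, t', ht'⟩ := Walk.not_nil_iff.mp (Walk.not_nil_of_ne hbu : ¬ t.reverse.Nil)
    have he₂ : s(u, z) ∈ t.edges := by
      have : s(u, z) ∈ t.reverse.edges := by rw [ht']; simp
      simpa [Walk.edges_reverse] using this
    have hnd : (Walk.cons h t).edges.Nodup := hd.edges_nodup
    rw [Walk.edges_cons] at hnd
    refine ⟨s(u, b), s(u, z), ?_, by simp, by simp [he₂], by simp, by simp⟩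
    intro hcontra
    rw [hcontra] at hnd
    exact (List.nodup_cons.mp hnd).1 he₂

/-- A cycle cannot have all its edges among the edges of a path. -/
lemma SteinerAux.nocyc {a b : V} (p : G.Walk a b) (hp : p.IsPath) :
    ∀ {u : V} (d : G.Walk u u), d.IsCycle → ¬ (∀ e ∈ d.edges, e ∈ p.edges) := by
  induction p with
  | nil =>
    intro u d hd hsub
    obtain ⟨e₁, _, _, he₁, _, _, _⟩ := SteinerAux.cyc2 d hd
    simpa using hsub e₁ he₁
  | cons h q ih =>
    rename_i x x' c
    intro u d hd hsub
    rw [Walk.cons_isPath_iff] at hp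
    by_cases hfirst : s(x, x') ∈ d.edges
    · have hxd : x ∈ d.support := d.fst_mem_support_of_mem_edges hfirst
      obtain ⟨e₁, e₂, hne, he₁, he₂, hx₁, hx₂⟩ := SteinerAux.cyc2 (d.rotate _ hxd) (hd.rotate hxd)
      have hmem : ∀ e ∈ (d.rotate _ hxd).edges, e ∈ Walk.edges (Walk.cons h q) := fun e he =>
        hsub e ((d.rotate_edges _ hxd).mem_iff.mp he)
      have key : ∀ e ∈ (d.rotate _ hxd).edges, x ∈ e → e = s(x, x') := by
        intro e he hxe
        rcases (by simpa using hmem e he : e = s(x, x') ∨ e ∈ q.edges) with h' | h'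
        · exact h'
        · exact absurd (SteinerAux.vert_mem_support h' hxe) hp.2
      exact hne ((key e₁ he₁ hx₁).trans (key e₂ he₂ hx₂).symm)
    · refine ih hp.1 d hd (fun e he => ?_)
      rcases (by simpa using hsub e he : e = s(x, x') ∨ e ∈ q.edges) with h' | h'
      · exact absurd (h' ▸ he) hfirst
      · exact h'

/-- toSubgraph of a walk is a tree provided no `G`-cycle has all edges among the walk's edges. -/
lemma SteinerAux.walktree {a b : V} (w : G.Walk a b)
    (hac : ∀ {u : V} (d : G.Walk u u), d.IsCycle → ¬ (∀ e ∈ d.edges, e ∈ w.edges)) :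
    w.toSubgraph.coe.IsTree := by
  refine ⟨w.toSubgraph_connected, ?_⟩
  intro v c hc
  have hmap : (c.map w.toSubgraph.hom).IsCycle := hc.map Subgraph.hom_injective
  refine hac (c.map w.toSubgraph.hom) hmap (fun e he => ?_)
  rw [Walk.edges_map, List.mem_map] at he
  obtain ⟨e', he', rfl⟩ := he
  have := c.edges_subset_edgeSet he'
  induction e' using Sym2.ind with
  | _ x y =>
    have : w.toSubgraph.Adj x y := this
    have := Subgraph.mem_edgeSet.mpr this
    rw [Walk.edgeSet_toSubgraph] at this
    simpa using this

/-- The subgraph of a path is a tree. -/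
lemma SteinerAux.pathtree {a b : V} (p : G.Walk a b) (hp : p.IsPath) :
    p.toSubgraph.coe.IsTree :=
  SteinerAux.walktree p (fun d hd => SteinerAux.nocyc p hp d hd)

/-- take/drop supports of a path only share the split vertex. -/
lemma SteinerAux.split_support {a b w : V} (p : G.Walk a b) (hp : p.IsPath)
    (hw : w ∈ p.support) :
    ∀ y, y ∈ (p.takeUntil w hw).support → y ∈ (p.dropUntil w hw).support → y = w := by
  intro y hy₁ hy₂
  have hnd : p.support.Nodup := hp.support_nodup
  rw [← p.take_spec hw, Walk.support_append] at hnd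
  rw [Walk.support_eq_cons (p.dropUntil w hw)] at hy₂
  rcases List.mem_cons.mp hy₂ with rfl | htl
  · rfl
  · exact absurd htl (List.disjoint_of_nodup_append hnd hy₁)

/-- take/drop edges of a path are disjoint. -/
lemma SteinerAux.split_edges {a b w : V} (p : G.Walk a b) (hp : p.IsPath)
    (hw : w ∈ p.support) :
    ∀ e, e ∈ (p.takeUntil w hw).edges → e ∈ (p.dropUntil w hw).edges → False := by
  intro e he₁ he₂
  have hnd : p.edges.Nodup := hp.edges_nodup
  rw [← p.take_spec hw, Walk.edges_append] at hnd
  exact (List.disjoint_of_nodup_append hnd) he₁ he₂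

/-- First-hit prefix of a path with respect to a vertex set. -/
lemma SteinerAux.firsthit {x v : V} (q : G.Walk x v) (hq : q.IsPath) (L : Set V) (hv : v ∈ L) :
    ∃ (w : V) (r : G.Walk x w), w ∈ L ∧ r.IsPath ∧
      (∀ e ∈ r.edges, e ∈ q.edges) ∧ (∀ y ∈ r.support, y ∈ q.support) ∧
      (∀ y ∈ r.support, y ∈ L → y = w) := by
  induction q with
  | nil =>
    exact ⟨_, Walk.nil, hv, Walk.IsPath.nil, by simp, by simp, by simp⟩
  | @cons s t c h q ih =>
    by_cases hs : s ∈ L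
    · exact ⟨s, Walk.nil, hs, Walk.IsPath.nil, by simp, by simp, by simp⟩
    · rw [Walk.cons_isPath_iff] at hq
      obtain ⟨w, r, hwL, hr, hre, hrs, hrl⟩ := ih hq.1 hv
      refine ⟨w, Walk.cons h r, hwL, ?_, ?_, ?_, ?_⟩
      · rw [Walk.cons_isPath_iff]
        exact ⟨hr, fun hsr => hq.2 (hrs s hsr)⟩
      · intro e he
        rcases (by simpa using he : e = s(s, t) ∨ e ∈ r.edges) with rfl | h'
        · simp
        · simp [hre e h']
      · intro y hy
        rcases (by simpa using hy : y = s ∨ y ∈ r.support) with rfl | h'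
        · simp
        · simp [hrs y h']
      · intro y hy hyL
        rcases (by simpa using hy : y = s ∨ y ∈ r.support) with rfl | h'
        · exact absurd hyL hs
        · exact hrl y h' hyL

variable [Fintype V]

lemma SteinerAux.steiner_edge_nonempty {S : Set V} {T : G.Subgraph}
    (hT : G.IsSteinerTree S T)
    {s₁ s₂ : V} (h₁ : s₁ ∈ S) (h₂ : s₂ ∈ S) (hne : s₁ ≠ s₂) : T.edgeSet.Nonempty := by
  obtain ⟨W⟩ := hT.2.isConnected ⟨s₁, hT.1 h₁⟩ ⟨s₂, hT.1 h₂⟩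
  have hne2 : (⟨s₁, hT.1 h₁⟩ : T.verts) ≠ ⟨s₂, hT.1 h₂⟩ :=
    fun h => hne (congrArg Subtype.val h)
  cases W with
  | nil => exact absurd rfl hne2
  | cons h q =>
    rename_i y
    exact ⟨s(s₁, ↑y), Subgraph.mem_edgeSet.mpr h⟩

lemma SteinerAux.two_le_steinerConn {S : Set V} {T₁ T₂ : G.Subgraph}
    (h₁ : G.IsSteinerTree S T₁) (h₂ : G.IsSteinerTree S T₂)
    (he : T₁.edgeSet ∩ T₂.edgeSet = ∅) (hv : T₁.verts ∩ T₂.verts = S)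
    {s₁ s₂ : V} (hs₁ : s₁ ∈ S) (hs₂ : s₂ ∈ S) (hne : s₁ ≠ s₂) :
    2 ≤ G.steinerConn S := by
  have hbdd : BddAbove {n : ℕ | ∃ f : Fin n → G.Subgraph,
      (∀ i, G.IsSteinerTree S (f i)) ∧
      ∀ i j, i ≠ j →
        (f i).edgeSet ∩ (f j).edgeSet = ∅ ∧ (f i).verts ∩ (f j).verts = S} := by
    refine ⟨Fintype.card (Sym2 V), fun n hn => ?_⟩
    obtain ⟨f, hf, hdisj⟩ := hn
    have hne' : ∀ i, ((f i).edgeSet).Nonempty :=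
      fun i => SteinerAux.steiner_edge_nonempty (hf i) hs₁ hs₂ hne
    have hinj : Function.Injective (fun i => (hne' i).choose) := by
      intro i j hij
      by_contra hij'
      have hij2 : (hne' i).choose = (hne' j).choose := hij
      have h1 := (hne' i).choose_spec
      have h2 := (hne' j).choose_spec
      rw [hij2] at h1
      have : (hne' j).choose ∈ (f i).edgeSet ∩ (f j).edgeSet := ⟨h1, h2⟩
      rw [(hdisj i j hij').1] at this
      exact this
    calc n = Fintype.card (Fin n) := (Fintype.card_fin n).symm
    _ ≤ Fintype.card (Sym2 V) := Fintype.card_le_of_injective _ hinj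
  refine le_csSup hbdd ?_
  refine ⟨![T₁, T₂], fun i => by fin_cases i <;> assumption, ?_⟩
  intro i j hij
  fin_cases i <;> fin_cases j <;> simp_all <;>
    exact ⟨by rw [Set.inter_comm]; exact he, by rw [Set.inter_comm]; exact hv⟩

lemma SteinerAux.steinerConn_le_one (hk : G.kappaBar 3 = 1) (S : Finset V)
    (hcard : S.card = 3) : G.steinerConn ↑S ≤ 1 := by
  have hsub : {m : ℕ | ∃ S' : Finset V, S'.card = 3 ∧ G.steinerConn ↑S' = m} ⊆
      Set.range (fun S' : Finset V => G.steinerConn ↑S') := by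
    rintro m ⟨S', _, hS'⟩; exact ⟨S', hS'⟩
  have hbdd : BddAbove {m : ℕ | ∃ S' : Finset V, S'.card = 3 ∧ G.steinerConn ↑S' = m} :=
    ((Set.finite_range _).subset hsub).bddAbove
  exact hk ▸ le_csSup hbdd ⟨S, hcard, rfl⟩

lemma SteinerAux.three_le_card (hk : G.kappaBar 3 = 1) : 3 ≤ Fintype.card V := by
  rcases Set.eq_empty_or_nonempty
      {m : ℕ | ∃ S : Finset V, S.card = 3 ∧ G.steinerConn ↑S = m} with he | ⟨m, S, hc, _⟩
  · rw [SimpleGraph.kappaBar, he, csSup_empty] at hk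
    exact absurd hk (by norm_num)
  · exact hc ▸ Finset.card_le_univ S

/-- Package a walk as a Steiner tree. -/
lemma SteinerAux.walk_isSteinerTree {a b : V} (w : G.Walk a b)
    (ht : w.toSubgraph.coe.IsTree) {S : Set V} (hS : ∀ s ∈ S, s ∈ w.support) :
    G.IsSteinerTree S w.toSubgraph :=
  ⟨fun s hs => (Walk.mem_verts_toSubgraph w).mpr (hS s hs), ht⟩

lemma SteinerAux.walk_edge_disj {a b a' b' : V} {w₁ : G.Walk a b} {w₂ : G.Walk a' b'}
    (h : ∀ e, e ∈ w₁.edges → e ∈ w₂.edges → False) :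
    w₁.toSubgraph.edgeSet ∩ w₂.toSubgraph.edgeSet = ∅ := by
  rw [Set.eq_empty_iff_forall_notMem]
  intro e he
  rw [Set.mem_inter_iff, Walk.edgeSet_toSubgraph, Walk.edgeSet_toSubgraph] at he
  exact h e he.1 he.2

lemma SteinerAux.walk_verts_inter {a b a' b' : V} {w₁ : G.Walk a b} {w₂ : G.Walk a' b'}
    {S : Set V} (h₁ : ∀ y ∈ S, y ∈ w₁.support) (h₂ : ∀ y ∈ S, y ∈ w₂.support)
    (h₃ : ∀ y, y ∈ w₁.support → y ∈ w₂.support → y ∈ S) :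
    w₁.toSubgraph.verts ∩ w₂.toSubgraph.verts = S := by
  ext y
  simp only [Set.mem_inter_iff, Walk.mem_verts_toSubgraph]
  exact ⟨fun hy => h₃ y hy.1 hy.2, fun hy => ⟨h₁ y hy, h₂ y hy⟩⟩

/-- Build the final contradiction from two internally disjoint Steiner trees. -/
lemma SteinerAux.build_false {G : SimpleGraph V}
    (hle : ∀ S : Finset V, S.card = 3 → G.steinerConn ↑S ≤ 1)
    {α β γ : V} (hαβ : α ≠ β) (hαγ : α ≠ γ) (hβγ : β ≠ γ)
    {T₁ T₂ : G.Subgraph}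
    (h₁ : G.IsSteinerTree {α, β, γ} T₁) (h₂ : G.IsSteinerTree {α, β, γ} T₂)
    (he : T₁.edgeSet ∩ T₂.edgeSet = ∅)
    (hv : T₁.verts ∩ T₂.verts = {α, β, γ}) : False := by
  have hcoe : ((({α, β, γ} : Finset V)) : Set V) = {α, β, γ} := by simp
  have hcard : ({α, β, γ} : Finset V).card = 3 :=
    Finset.card_eq_three.mpr ⟨α, β, γ, hαβ, hαγ, hβγ, rfl⟩
  rw [← hcoe] at h₁ h₂ hv
  have h2 := SteinerAux.two_le_steinerConn h₁ h₂ he hv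
    (s₁ := α) (s₂ := β) (by simp) (by simp) hαβ
  have := h2.trans (hle _ hcard)
  norm_num at this


lemma SteinerAux.closure {P : V → Prop} (hP : ∀ s t, P s → G.Adj s t → P t) :
    ∀ {α β : V} (W : G.Walk α β), P α → P β := by
  intro α β W
  induction W with
  | nil => exact id
  | cons hW W' ih => exact fun h1 => ih (hP _ _ h1 hW)

/-- The main contradiction: a cycle plus an extra incident edge at one of its vertices
contradicts `κ̄₃ ≤ 1` in a bridgeless graph. -/
lemma SteinerAux.main (hb : ∀ e : Sym2 V, ¬ G.IsBridge e)
    (hle : ∀ S : Finset V, S.card = 3 → G.steinerConn ↑S ≤ 1)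
    {v : V} (c : G.Walk v v) (hc : c.IsCycle) {x : V} (hadj : G.Adj v x)
    (hnc : s(v, x) ∉ c.edges) : False := by
  cases c with
  | nil => exact hc.ne_nil rfl
  | cons h p =>
    rename_i a
    obtain ⟨hp, hva⟩ := (Walk.cons_isCycle_iff p h).mp hc
    have hvx : v ≠ x := G.ne_of_adj hadj
    have hvA : v ≠ a := G.ne_of_adj h
    have hxa : x ≠ a := by rintro rfl; exact hnc (by simp)
    have hnc' : s(v, x) ∉ p.edges := fun hmem => hnc (by simp [hmem])
    -- a path from x to v avoiding the edge s(v, x)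
    have hreach : (G \ SimpleGraph.fromEdgeSet {s(v, x)}).Reachable x v := by
      have hnb := hb s(v, x)
      rw [SimpleGraph.isBridge_iff] at hnb
      push_neg at hnb
      exact hnb.symm
    obtain ⟨q0⟩ := hreach
    have hsubE : ∀ e ∈ (q0.toPath : (G \ SimpleGraph.fromEdgeSet {s(v, x)}).Walk x v).edges,
        e ∈ G.edgeSet := fun e he =>
      SimpleGraph.edgeSet_mono sdiff_le (Walk.edges_subset_edgeSet _ he)
    set q : G.Walk x v := Walk.transfer _ G hsubE with hqdef
    have hq : q.IsPath := Walk.IsPath.transfer hsubE (q0.toPath).2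
    have hqe : s(v, x) ∉ q.edges := by
      rw [hqdef, Walk.edges_transfer]
      intro hmem
      have := Walk.adj_of_mem_edges _ hmem
      simp only [SimpleGraph.sdiff_adj, SimpleGraph.fromEdgeSet_adj] at this
      exact this.2 ⟨rfl, hvx⟩
    obtain ⟨w, r, hwL, hr, hre, hrs, hrl⟩ :=
      SteinerAux.firsthit q hq {y : V | y ∈ (Walk.cons h p).support} (by simp)
    simp only [Set.mem_setOf_eq] at hwL hrl
    have hrex : s(v, x) ∉ r.edges := fun hm => hqe (hre _ hm)
    have hpL : ∀ y ∈ p.support, y ∈ (Walk.cons h p).support := by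
      intro y hy; simp [hy]
    by_cases hxc : x ∈ (Walk.cons h p).support
    · -- CHORD case
      have hxp : x ∈ p.support := by
        rcases (by simpa using hxc : x = v ∨ x ∈ p.support) with rfl | h'
        · exact absurd rfl hvx.symm
        · exact h'
      set p1 := p.takeUntil x hxp with hp1def
      set p2 := p.dropUntil x hxp with hp2def
      have hp1 : p1.IsPath := hp.takeUntil hxp
      have hp2 : p2.IsPath := hp.dropUntil hxp
      have hsplit := SteinerAux.split_support p hp hxp
      have hsedge := SteinerAux.split_edges p hp hxp
      obtain ⟨w2, h3, p2', hp2c⟩ :=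
        Walk.not_nil_iff.mp (Walk.not_nil_of_ne (hvx.symm : x ≠ v) : ¬ p2.Nil)
      have hxw2 : x ≠ w2 := G.ne_of_adj h3
      obtain ⟨hp2', hxnp2'⟩ := (Walk.cons_isPath_iff h3 p2').mp (hp2c ▸ hp2)
      have hw2p2 : w2 ∈ p2.support := by rw [hp2c]; simp
      have hsub2' : ∀ y ∈ p2'.support, y ∈ p2.support := by
        intro y hy; rw [hp2c]; simp [hy]
      have hw2v : w2 ≠ v := by
        rintro rfl
        have : s(x, w2) ∈ p2.edges := by rw [hp2c]; simp
        have : s(x, w2) ∈ p.edges := Walk.edges_dropUntil_subset p hxp this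
        exact hnc (by simp [Walk.edges_cons]; right; rwa [Sym2.eq_swap] at this)
      have haw2 : a ≠ w2 := by
        rintro rfl
        exact hxa (hsplit a p1.start_mem_support hw2p2).symm
      have hvp1 : v ∉ p1.support := fun hm => hvx (hsplit v hm p2.end_mem_support)
      have hap2' : a ∉ p2'.support := fun hm =>
        hxa ((hsplit a p1.start_mem_support (hsub2' a hm)).symm)
      -- tree 1 : a — v — (p2' reversed) — w2
      set T1w : G.Walk a w2 := Walk.cons h.symm p2'.reverse with hT1def
      have hT1path : T1w.IsPath := by
        rw [hT1def, Walk.cons_isPath_iff]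
        refine ⟨hp2'.reverse, ?_⟩
        rw [Walk.support_reverse, List.mem_reverse]
        exact hap2'
      -- tree 2 : p1 with pendant edge x—v and edge x—w2
      set chain : G.Walk x w2 :=
        Walk.cons hadj.symm (Walk.cons hadj (Walk.cons h3 Walk.nil)) with hchaindef
      set T2w : G.Walk a w2 := p1.append chain with hT2def
      have hw2p1 : w2 ∉ p1.support := fun hm =>
        hxw2 (hsplit w2 hm hw2p2).symm
      set P2core : G.Walk a w2 := p1.append (Walk.cons h3 Walk.nil) with hPcoredef
      have hPcore : P2core.IsPath := by
        rw [hPcoredef, Walk.isPath_def, Walk.support_append]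
        simp only [Walk.support_cons, Walk.support_nil, List.tail_cons]
        rw [List.nodup_append']
        exact ⟨hp1.support_nodup, by simp, by simpa [List.disjoint_singleton] using hw2p1⟩
      have hmemT2 : ∀ e ∈ T2w.edges,
          e ∈ p1.edges ∨ e = s(x, v) ∨ e = s(v, x) ∨ e = s(x, w2) := by
        intro e he
        rw [hT2def, Walk.edges_append] at he
        rcases List.mem_append.mp he with h' | h'
        · exact Or.inl h'
        · simp only [hchaindef, Walk.edges_cons, Walk.edges_nil, List.mem_cons,
            List.not_mem_nil, or_false] at h'
          rcases h' with h' | h' | h'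
          · exact Or.inr (Or.inl h')
          · exact Or.inr (Or.inr (Or.inl h'))
          · exact Or.inr (Or.inr (Or.inr h'))
      have hvp1e : ∀ e ∈ p1.edges, v ∉ e := fun e he hv' =>
        hvp1 (vert_mem_support he hv')
      have hT2tree : T2w.toSubgraph.coe.IsTree := by
        refine SteinerAux.walktree T2w ?_
        intro u d hd hall
        have key : ∀ e' ∈ d.edges, v ∈ e' → False := by
          intro e' he' hv'
          have hvd : v ∈ d.support := SteinerAux.vert_mem_support he' hv'
          obtain ⟨e₁, e₂, hnee, he₁, he₂, hv₁, hv₂⟩ := SteinerAux.cyc2 (d.rotate _ hvd) (hd.rotate hvd)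
          have key2 : ∀ e'' ∈ (d.rotate _ hvd).edges, v ∈ e'' → e'' = s(x, v) := by
            intro e'' he'' hv''
            have := hall e'' ((d.rotate_edges _ hvd).mem_iff.mp he'')
            rcases hmemT2 e'' this with h'' | h'' | h'' | h''
            · exact absurd hv'' (hvp1e e'' h'')
            · exact h''
            · rw [h'']; exact Sym2.eq_swap
            · exfalso
              rw [h''] at hv''
              rcases Sym2.mem_iff.mp hv'' with rfl | rfl
              · exact hvx rfl
              · exact hw2v rfl
          exact hnee ((key2 e₁ he₁ hv₁).trans (key2 e₂ he₂ hv₂).symm)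
        refine SteinerAux.nocyc P2core hPcore d hd ?_
        intro e he
        rcases hmemT2 e (hall e he) with h' | h' | h' | h'
        · rw [hPcoredef, Walk.edges_append]; exact List.mem_append.mpr (Or.inl h')
        · exact (key e he (by rw [h']; simp)).elim
        · exact (key e he (by rw [h']; simp)).elim
        · rw [hPcoredef, Walk.edges_append]
          refine List.mem_append.mpr (Or.inr ?_)
          simp [h']
      -- memberships
      have hmemT1sup : ∀ y, y ∈ T1w.support ↔ (y = a ∨ y ∈ p2'.support) := by
        intro y
        rw [hT1def]
        simp [Walk.support_reverse]
      have hmemT2sup : ∀ y, y ∈ T2w.support ↔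
          (y ∈ p1.support ∨ y = x ∨ y = v ∨ y = w2) := by
        intro y
        rw [hT2def, Walk.mem_support_append_iff, hchaindef]
        simp only [Walk.support_cons, Walk.support_nil, List.mem_cons, List.not_mem_nil,
          or_false]
        tauto
      have hav : a ≠ v := Ne.symm hvA
      refine SteinerAux.build_false hle haw2 hav hw2v
        (T₁ := T1w.toSubgraph) (T₂ := T2w.toSubgraph) ?_ ?_ ?_ ?_
      · refine SteinerAux.walk_isSteinerTree _ (pathtree _ hT1path) ?_
        intro s hs
        rcases hs with rfl | rfl | rfl
        · exact T1w.start_mem_support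
        · rw [hmemT1sup]; exact Or.inr p2'.start_mem_support
        · rw [hmemT1sup]; exact Or.inr p2'.end_mem_support
      · refine SteinerAux.walk_isSteinerTree _ hT2tree ?_
        intro s hs
        rcases hs with rfl | rfl | rfl
        · rw [hmemT2sup]; exact Or.inl p1.start_mem_support
        · rw [hmemT2sup]; tauto
        · rw [hmemT2sup]; tauto
      · refine SteinerAux.walk_edge_disj ?_
        intro e he1 he2
        rw [hT1def, Walk.edges_cons] at he1
        rcases List.mem_cons.mp he1 with rfl | he1'
        · rcases hmemT2 _ he2 with h' | h' | h' | h'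
          · exact hvp1e _ h' (by simp)
          · rw [Sym2.eq_iff] at h'
            have hav : a ≠ v := Ne.symm hvA
            have hax2 : a ≠ x := fun hh => hxa hh.symm
            tauto
          · rw [Sym2.eq_iff] at h'
            have hav : a ≠ v := Ne.symm hvA
            have hax2 : a ≠ x := fun hh => hxa hh.symm
            tauto
          · rw [Sym2.eq_iff] at h'
            have hax2 : a ≠ x := fun hh => hxa hh.symm
            have hvw2 : v ≠ w2 := Ne.symm hw2v
            tauto
        · rw [Walk.edges_reverse, List.mem_reverse] at he1'
          have he1p2 : e ∈ p2.edges := by rw [hp2c, Walk.edges_cons]; exact List.mem_cons_of_mem _ he1'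
          rcases hmemT2 _ he2 with h' | h' | h' | h'
          · exact hsedge e h' he1p2
          · exact hxnp2' (vert_mem_support he1' (by rw [h']; simp))
          · exact hxnp2' (vert_mem_support he1' (by rw [h']; simp))
          · exact hxnp2' (vert_mem_support he1' (by rw [h']; simp))
      · refine SteinerAux.walk_verts_inter ?_ ?_ ?_
        · intro y hy
          rcases hy with rfl | rfl | rfl
          · exact T1w.start_mem_support
          · rw [hmemT1sup]; exact Or.inr p2'.start_mem_support
          · rw [hmemT1sup]; exact Or.inr p2'.end_mem_support
        · intro y hy
          rcases hy with rfl | rfl | rfl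
          · rw [hmemT2sup]; exact Or.inl p1.start_mem_support
          · rw [hmemT2sup]; tauto
          · rw [hmemT2sup]; tauto
        · intro y hy1 hy2
          rw [hmemT1sup] at hy1
          rw [hmemT2sup] at hy2
          rcases hy1 with rfl | hy1'
          · exact Or.inl rfl
          · rcases hy2 with hy2' | rfl | rfl | rfl
            · exact absurd ((hsplit y hy2' (hsub2' y hy1')) ▸ hy1') hxnp2'
            · exact absurd hy1' hxnp2'
            · exact Or.inr (Or.inr rfl)
            · exact Or.inr (Or.inl rfl)
    · -- x is not on the cycle
      by_cases hwv : w = v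
      have hax : a ≠ x := fun hh => hxa hh.symm
      · -- CLOSED EAR case
        have hwv2 : v = w := hwv.symm
        subst hwv2
        set T1w : G.Walk a x := Walk.cons h.symm (Walk.cons hadj Walk.nil) with hT1def
        have hT1path : T1w.IsPath := by
          rw [hT1def, Walk.isPath_def]
          simp only [Walk.support_cons, Walk.support_nil]
          simp [hvA.symm, hvx, hax]
        set T2w : G.Walk a x := p.append r.reverse with hT2def
        have hT2path : T2w.IsPath := by
          rw [hT2def, Walk.isPath_def, Walk.support_append, List.nodup_append']
          refine ⟨hp.support_nodup, ?_, ?_⟩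
          · have := hr.reverse.support_nodup
            rw [Walk.support_eq_cons] at this
            exact this.of_cons
          · intro y hyp hyt
            have hyr : y ∈ r.support := by
              have : y ∈ r.reverse.support := List.mem_of_mem_tail hyt
              rwa [Walk.support_reverse, List.mem_reverse] at this
            have : y = v := hrl y hyr (hpL y hyp)
            subst this
            have : r.reverse.support.Nodup := hr.reverse.support_nodup
            rw [Walk.support_eq_cons] at this
            exact (List.nodup_cons.mp this).1 hyt
        have hmemT2sup : ∀ y, y ∈ T2w.support ↔ (y ∈ p.support ∨ y ∈ r.support) := by
          intro y
          rw [hT2def, Walk.mem_support_append_iff, Walk.support_reverse, List.mem_reverse]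
        refine SteinerAux.build_false hle (Ne.symm hvA) hax hvx
          (T₁ := T1w.toSubgraph) (T₂ := T2w.toSubgraph) ?_ ?_ ?_ ?_
        · refine SteinerAux.walk_isSteinerTree _ (pathtree _ hT1path) ?_
          intro s hs
          rcases hs with rfl | rfl | rfl <;> · rw [hT1def]; simp
        · refine SteinerAux.walk_isSteinerTree _ (pathtree _ hT2path) ?_
          intro s hs
          rcases hs with rfl | rfl | rfl
          · rw [hmemT2sup]; exact Or.inl p.start_mem_support
          · rw [hmemT2sup]; exact Or.inl p.end_mem_support
          · rw [hmemT2sup]; exact Or.inr r.start_mem_support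
        · refine SteinerAux.walk_edge_disj ?_
          intro e he1 he2
          have he2' : e ∈ p.edges ∨ e ∈ r.edges := by
            rw [hT2def, Walk.edges_append, List.mem_append, Walk.edges_reverse,
              List.mem_reverse] at he2
            exact he2
          rcases (by rw [hT1def] at he1; simpa using he1 : e = s(a, v) ∨ e = s(v, x))
            with rfl | rfl
          · rcases he2' with h' | h'
            · exact hva (by rwa [Sym2.eq_swap] at h')
            · have : a ∈ r.support := r.fst_mem_support_of_mem_edges h'
              exact hvA (hrl a this (by simp [hpL a p.start_mem_support]) ).symm
          · rcases he2' with h' | h'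
            · exact hnc' h'
            · exact hrex h'
        · refine SteinerAux.walk_verts_inter ?_ ?_ ?_
          · intro y hy
            rcases hy with rfl | rfl | rfl <;> · rw [hT1def]; simp
          · intro y hy
            rcases hy with rfl | rfl | rfl
            · rw [hmemT2sup]; exact Or.inl p.start_mem_support
            · rw [hmemT2sup]; exact Or.inl p.end_mem_support
            · rw [hmemT2sup]; exact Or.inr r.start_mem_support
          · intro y hy1 _
            rw [hT1def] at hy1
            simpa using hy1
      · -- OPEN EAR case
        have hwp : w ∈ p.support := by
          rcases (by simpa using hwL : w = v ∨ w ∈ p.support) with rfl | h'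
          · exact absurd rfl hwv
          · exact h'
        set t := p.takeUntil w hwp with htdef
        set d := p.dropUntil w hwp with hddef
        have ht : t.IsPath := hp.takeUntil hwp
        have hd : d.IsPath := hp.dropUntil hwp
        have hsplit := SteinerAux.split_support p hp hwp
        have hsedge := SteinerAux.split_edges p hp hwp
        have hvt : v ∉ t.support := fun hm => hwv (hsplit v hm d.end_mem_support).symm
        have htP : ∀ y ∈ t.support, y ∈ p.support := Walk.support_takeUntil_subset p hwp
        have hdP : ∀ y ∈ d.support, y ∈ p.support := Walk.support_dropUntil_subset p hwp
        set T1w : G.Walk x w := Walk.cons hadj.symm (Walk.cons h t) with hT1def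
        have hT1path : T1w.IsPath := by
          rw [hT1def, Walk.cons_isPath_iff, Walk.cons_isPath_iff]
          refine ⟨⟨ht, hvt⟩, ?_⟩
          intro hm
          rcases (by simpa using hm : x = v ∨ x ∈ t.support) with rfl | h'
          · exact hvx rfl
          · exact hxc (hpL x (htP x h'))
        set T2w : G.Walk x v := r.append d with hT2def
        have hT2path : T2w.IsPath := by
          rw [hT2def, Walk.isPath_def, Walk.support_append, List.nodup_append']
          refine ⟨hr.support_nodup, ?_, ?_⟩
          · have := hd.support_nodup
            rw [Walk.support_eq_cons] at this
            exact this.of_cons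
          · intro y hyr hyt
            have hyd : y ∈ d.support := List.mem_of_mem_tail hyt
            have : y = w := hrl y hyr (hpL y (hdP y hyd))
            subst this
            have := hd.support_nodup
            rw [Walk.support_eq_cons] at this
            exact (List.nodup_cons.mp this).1 hyt
        have hmemT1sup : ∀ y, y ∈ T1w.support ↔ (y = x ∨ y = v ∨ y ∈ t.support) := by
          intro y; rw [hT1def]; simp
        have hmemT2sup : ∀ y, y ∈ T2w.support ↔ (y ∈ r.support ∨ y ∈ d.support) := by
          intro y; rw [hT2def, Walk.mem_support_append_iff]
        have hxw : x ≠ w := fun hh => hxc (hh ▸ hwL)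
        have hvw : v ≠ w := fun hh => hwv hh.symm
        refine SteinerAux.build_false hle hvx.symm hxw hvw
          (T₁ := T1w.toSubgraph) (T₂ := T2w.toSubgraph) ?_ ?_ ?_ ?_
        · refine SteinerAux.walk_isSteinerTree _ (pathtree _ hT1path) ?_
          intro s hs
          rcases hs with rfl | rfl | rfl
          · exact T1w.start_mem_support
          · rw [hmemT1sup]; tauto
          · rw [hmemT1sup]; exact Or.inr (Or.inr t.end_mem_support)
        · refine SteinerAux.walk_isSteinerTree _ (pathtree _ hT2path) ?_
          intro s hs
          rcases hs with rfl | rfl | rfl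
          · exact T2w.start_mem_support
          · rw [hmemT2sup]; exact Or.inr d.end_mem_support
          · rw [hmemT2sup]; exact Or.inr d.start_mem_support
        · refine SteinerAux.walk_edge_disj ?_
          intro e he1 he2
          have he2' : e ∈ r.edges ∨ e ∈ d.edges := by
            rw [hT2def, Walk.edges_append, List.mem_append] at he2
            exact he2
          have he1' : e = s(x, v) ∨ e = s(v, a) ∨ e ∈ t.edges := by
            rw [hT1def] at he1
            simpa using he1
          rcases he1' with rfl | rfl | he1t
          · rcases he2' with h' | h'
            · exact hrex (by rwa [Sym2.eq_swap] at h')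
            · exact hxc (hpL x (hdP x (d.fst_mem_support_of_mem_edges h')))
          · rcases he2' with h' | h'
            · exact hwv (hrl v (r.fst_mem_support_of_mem_edges h')
                (by simp)).symm
            · exact hva (Walk.edges_dropUntil_subset p hwp h')
          · rcases he2' with h' | h'
            · induction e using Sym2.ind with
              | _ y z =>
                have hy : y = w := hrl y (r.fst_mem_support_of_mem_edges h')
                  (hpL y (htP y (t.fst_mem_support_of_mem_edges he1t)))
                have hz : z = w := hrl z (r.snd_mem_support_of_mem_edges h')
                  (hpL z (htP z (t.snd_mem_support_of_mem_edges he1t)))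
                exact G.irrefl (hy ▸ hz ▸ Walk.adj_of_mem_edges t he1t)
            · exact hsedge e he1t h'
        · refine SteinerAux.walk_verts_inter ?_ ?_ ?_
          · intro y hy
            rcases hy with rfl | rfl | rfl
            · exact T1w.start_mem_support
            · rw [hmemT1sup]; tauto
            · rw [hmemT1sup]; exact Or.inr (Or.inr t.end_mem_support)
          · intro y hy
            rcases hy with rfl | rfl | rfl
            · exact T2w.start_mem_support
            · rw [hmemT2sup]; exact Or.inr d.end_mem_support
            · rw [hmemT2sup]; exact Or.inr d.start_mem_support
          · intro y hy1 hy2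
            rw [hmemT1sup] at hy1
            rw [hmemT2sup] at hy2
            rcases hy1 with rfl | rfl | hy1t
            · exact Or.inl rfl
            · exact Or.inr (Or.inl rfl)
            · rcases hy2 with hy2r | hy2d
              · exact Or.inr (Or.inr (hrl y hy2r (hpL y (htP y hy1t))))
              · exact Or.inr (Or.inr (hsplit y hy1t hy2d))


end Aux

/-- A connected graph with `κ̄₃(G) = 1` and no cut edge is a cycle. -/
theorem stmt_4 {V : Type*} [Fintype V] (G : SimpleGraph V) (hG : G.Connected)
    (hk : G.kappaBar 3 = 1) (hbridge : ∀ e : Sym2 V, ¬ G.IsBridge e) :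
    ∃ (x : V) (c : G.Walk x x), c.IsCycle ∧ (∀ v : V, v ∈ c.support) ∧
      G.edgeSet = {e | e ∈ c.edges} := by
  classical
  have hle : ∀ S : Finset V, S.card = 3 → G.steinerConn ↑S ≤ 1 :=
    fun S hS => SteinerAux.steinerConn_le_one hk S hS
  have hcard := SteinerAux.three_le_card (G := G) hk
  obtain ⟨x0, y0, hxy0⟩ := Fintype.exists_pair_of_one_lt_card (α := V) (by omega)
  obtain ⟨W⟩ := hG.preconnected x0 y0
  obtain ⟨b, hadj0⟩ : ∃ b, G.Adj x0 b := by
    cases W with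
    | nil => exact absurd rfl hxy0
    | cons hW _ => exact ⟨_, hW⟩
  have hreach : (G \ SimpleGraph.fromEdgeSet {s(x0, b)}).Reachable x0 b := by
    by_contra hr
    exact hbridge s(x0, b) (SimpleGraph.isBridge_iff.mpr hr)
  obtain ⟨u, cu, hcu, hecu⟩ :=
    SimpleGraph.adj_and_reachable_delete_edges_iff_exists_cycle.mp ⟨hadj0, hreach⟩
  have claim1 : ∀ z ∈ cu.support, ∀ y, G.Adj z y → s(z, y) ∈ cu.edges := by
    intro z hz y hzy
    by_contra hne
    refine SteinerAux.main hbridge hle (cu.rotate _ hz) (hcu.rotate hz) hzy ?_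
    intro hmem
    exact hne ((cu.rotate_edges _ hz).mem_iff.mp hmem)
  have claim2 : ∀ z, z ∈ cu.support := by
    intro z
    obtain ⟨W2⟩ := hG.preconnected u z
    refine SteinerAux.closure (P := fun y => y ∈ cu.support) ?_ W2 cu.start_mem_support
    intro s t hs hst
    exact cu.snd_mem_support_of_mem_edges (claim1 s hs t hst)
  refine ⟨u, cu, hcu, claim2, ?_⟩
  ext e
  constructor
  · intro he
    induction e using Sym2.ind with
    | _ s t => exact claim1 s (claim2 s) t he
  · intro he
    exact cu.edges_subset_edgeSet he
end

section
/- Let G be a connected graph with 5 vertices and exactly 6 edges. Then κ̄₄(G) = 1. -/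
open SimpleGraph

section Helpers
variable {V : Type*}

private lemma isTree_of_iso {A B : Type*} {GA : SimpleGraph A} {GB : SimpleGraph B}
    (e : GA ≃g GB) (h : GA.IsTree) : GB.IsTree := by
  refine ⟨e.connected_iff.mp h.isConnected, ?_⟩
  intro v c hc
  exact h.IsAcyclic (c.map e.symm.toHom)
    ((SimpleGraph.Walk.map_isCycle_iff_of_injective e.symm.injective).mpr hc)

private lemma exists_spanning_tree_aux [Fintype V] :
    ∀ n (G : SimpleGraph V), G.edgeSet.ncard ≤ n → G.Connected →
      ∃ T : SimpleGraph V, T ≤ G ∧ T.IsTree := by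
  intro n
  induction n with
  | zero =>
    intro G hle h
    by_cases ha : G.IsAcyclic
    · exact ⟨G, le_rfl, h, ha⟩
    · exfalso
      rw [isAcyclic_iff_forall_edge_isBridge] at ha
      push_neg at ha
      obtain ⟨e, he, -⟩ := ha
      have : 0 < G.edgeSet.ncard := (Set.ncard_pos (Set.toFinite _)).mpr ⟨e, he⟩
      omega
  | succ n ih =>
    intro G hle h
    by_cases ha : G.IsAcyclic
    · exact ⟨G, le_rfl, h, ha⟩
    · rw [isAcyclic_iff_forall_edge_isBridge] at ha
      push_neg at ha
      obtain ⟨e, he, hb⟩ := ha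
      induction e using Sym2.ind with
      | _ u v =>
      rw [SimpleGraph.mem_edgeSet] at he
      rw [SimpleGraph.isBridge_iff] at hb
      push_neg at hb
      have hreach : (G \ SimpleGraph.fromEdgeSet {s(u, v)}).Reachable u v := hb
      set G' := G \ SimpleGraph.fromEdgeSet {s(u, v)} with hG'
      have hadj' : ∀ a b, G.Adj a b → G'.Reachable a b := by
        intro a b hab
        by_cases heq : s(a, b) = s(u, v)
        · rw [Sym2.eq_iff] at heq
          rcases heq with ⟨rfl, rfl⟩ | ⟨rfl, rfl⟩
          · exact hreach
          · exact hreach.symm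
        · refine SimpleGraph.Adj.reachable ?_
          rw [hG', SimpleGraph.sdiff_adj, SimpleGraph.fromEdgeSet_adj]
          exact ⟨hab, fun h' => heq h'.1⟩
      have hpre : G'.Preconnected := by
        intro x y
        obtain ⟨p⟩ := h.preconnected x y
        induction p with
        | nil => exact SimpleGraph.Reachable.refl _
        | cons hadj q ihp => exact (hadj' _ _ hadj).trans ihp
      haveI : Nonempty V := h.nonempty
      have hconn : G'.Connected := ⟨hpre⟩
      have hE : G'.edgeSet = G.edgeSet \ {s(u, v)} := by
        simp [hG']
      have hlt : G'.edgeSet.ncard ≤ n := by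
        have := Set.ncard_diff_singleton_lt_of_mem (show s(u,v) ∈ G.edgeSet from he)
          (Set.toFinite _)
        rw [hE]
        omega
      obtain ⟨T, hT, ht⟩ := ih G' hlt hconn
      exact ⟨T, hT.trans sdiff_le, ht⟩

private lemma tree_card [Fintype V] {G : SimpleGraph V} (T : G.Subgraph)
    (h : T.coe.IsTree) : T.edgeSet.ncard + 1 = T.verts.ncard := by
  classical
  haveI : Fintype ↥T.verts := Set.Finite.fintype (Set.toFinite _)
  haveI : Fintype T.coe.edgeSet := Set.Finite.fintype (Set.toFinite _)
  have h1 := h.card_edgeFinset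
  have h2 : T.edgeSet.ncard = T.coe.edgeSet.ncard := by
    rw [← SimpleGraph.Subgraph.image_coe_edgeSet_coe T,
      Set.ncard_image_of_injective _ (Sym2.map.injective Subtype.coe_injective)]
  have h3 : T.coe.edgeSet.ncard = T.coe.edgeFinset.card := by
    rw [Set.ncard_eq_toFinset_card', SimpleGraph.edgeFinset]
  have h4 : T.verts.ncard = Fintype.card ↥T.verts := by
    rw [← Nat.card_coe_set_eq, Nat.card_eq_fintype_card]
  omega

private lemma steiner_one [Fintype V] (G : SimpleGraph V) (hG : G.Connected)
    (hcard : Fintype.card V = 5) (he : G.edgeSet.ncard = 6)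
    (S : Finset V) (hS : S.card = 4) : G.steinerConn ↑S = 1 := by
  classical
  set N := {n : ℕ | ∃ f : Fin n → G.Subgraph,
    (∀ i, G.IsSteinerTree ↑S (f i)) ∧
    ∀ i j, i ≠ j →
      (f i).edgeSet ∩ (f j).edgeSet = ∅ ∧ (f i).verts ∩ (f j).verts = ↑S} with hN
  have h1 : 1 ∈ N := by
    obtain ⟨T, hle, ht⟩ := exists_spanning_tree_aux G.edgeSet.ncard G le_rfl hG
    refine ⟨fun _ => G.toSubgraph T hle, fun _ => ⟨?_, ?_⟩, fun i j h => absurd (Subsingleton.elim i j) h⟩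
    · simp [SimpleGraph.toSubgraph]
    · refine isTree_of_iso
        ((G.toSubgraph T hle).spanningCoeEquivCoeOfSpanning (SimpleGraph.toSubgraph.isSpanning T hle)) ?_
      exact ht
  have hub : ∀ n ∈ N, n ≤ 1 := by
    intro n hn
    by_contra hgt
    push_neg at hgt
    obtain ⟨f, htree, hdisj⟩ := hn
    have hij : (⟨0, by omega⟩ : Fin n) ≠ ⟨1, by omega⟩ := by simp [Fin.ext_iff]
    obtain ⟨hecap, hvcap⟩ := hdisj _ _ hij
    set T1 := f ⟨0, by omega⟩
    set T2 := f ⟨1, by omega⟩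
    have hS4 : (↑S : Set V).ncard = 4 := by rw [Set.ncard_coe_finset, hS]
    have hA : 4 ≤ T1.verts.ncard := by
      rw [← hS4]; exact Set.ncard_le_ncard (htree _).1 (Set.toFinite _)
    have hB : 4 ≤ T2.verts.ncard := by
      rw [← hS4]; exact Set.ncard_le_ncard (htree _).1 (Set.toFinite _)
    have hsum : (T1.verts ∪ T2.verts).ncard + (T1.verts ∩ T2.verts).ncard
        = T1.verts.ncard + T2.verts.ncard :=
      Set.ncard_union_add_ncard_inter _ _ (Set.toFinite _) (Set.toFinite _)
    have huniv : (T1.verts ∪ T2.verts).ncard ≤ 5 := by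
      have := Set.ncard_le_ncard (Set.subset_univ (T1.verts ∪ T2.verts)) (Set.toFinite _)
      rwa [Set.ncard_univ, Nat.card_eq_fintype_card, hcard] at this
    have he1 := tree_card T1 (htree _).2
    have he2 := tree_card T2 (htree _).2
    have hedisj : Disjoint T1.edgeSet T2.edgeSet := Set.disjoint_iff_inter_eq_empty.mpr hecap
    have heu : T1.edgeSet.ncard + T2.edgeSet.ncard ≤ 6 := by
      rw [← Set.ncard_union_eq hedisj (Set.toFinite _) (Set.toFinite _), ← he]
      exact Set.ncard_le_ncard (Set.union_subset T1.edgeSet_subset T2.edgeSet_subset)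
        (Set.toFinite _)
    have hvcap4 : (T1.verts ∩ T2.verts).ncard = 4 := by rw [hvcap, hS4]
    -- derive |A| = |B| = 4
    have hA4 : T1.verts.ncard = 4 := by omega
    have hB4 : T2.verts.ncard = 4 := by omega
    have hAS : (↑S : Set V) = T1.verts :=
      Set.eq_of_subset_of_ncard_le (htree _).1 (by omega) (Set.toFinite _)
    have hBS : (↑S : Set V) = T2.verts :=
      Set.eq_of_subset_of_ncard_le (htree _).1 (by omega) (Set.toFinite _)
    -- all 6 edges lie in T1 ∪ T2
    have heall : T1.edgeSet ∪ T2.edgeSet = G.edgeSet := by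
      refine Set.eq_of_subset_of_ncard_le
        (Set.union_subset T1.edgeSet_subset T2.edgeSet_subset) ?_ (Set.toFinite _)
      rw [he, Set.ncard_union_eq hedisj (Set.toFinite _) (Set.toFinite _)]
      omega
    -- find vertex outside S
    have hw : ∃ w, w ∉ (↑S : Set V) := by
      by_contra hc
      push_neg at hc
      have : (Set.univ : Set V) ⊆ ↑S := fun x _ => hc x
      have := Set.ncard_le_ncard this (Set.toFinite _)
      rw [Set.ncard_univ, Nat.card_eq_fintype_card, hcard, hS4] at this
      omega
    obtain ⟨w, hwS⟩ := hw
    have hSne : S.Nonempty := by rw [← Finset.card_pos, hS]; omega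
    obtain ⟨v0, hv0⟩ := hSne
    obtain ⟨p⟩ := hG.preconnected w v0
    cases p with
    | nil => exact hwS hv0
    | cons hadj q =>
      rename_i x
      have hmem : s(w, x) ∈ G.edgeSet := hadj
      rw [← heall] at hmem
      rcases hmem with hm | hm
      · exact hwS (hAS ▸ T1.edge_vert (SimpleGraph.Subgraph.mem_edgeSet.mp hm))
      · exact hwS (hBS ▸ T2.edge_vert (SimpleGraph.Subgraph.mem_edgeSet.mp hm))
  rw [SimpleGraph.steinerConn]
  exact le_antisymm (csSup_le ⟨1, h1⟩ hub) (le_csSup ⟨1, hub⟩ h1)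


end Helpers

/-- A connected graph with 5 vertices and exactly 6 edges has `κ̄₄(G) = 1`. -/
theorem stmt_7 {V : Type*} [Fintype V] (G : SimpleGraph V) (hG : G.Connected)
    (hcard : Fintype.card V = 5) (he : G.edgeSet.ncard = 6) :
    G.kappaBar 4 = 1 := by
  classical
  have hset : {m : ℕ | ∃ S : Finset V, S.card = 4 ∧ G.steinerConn ↑S = m} = {1} := by
    ext m
    constructor
    · rintro ⟨S, hS, rfl⟩
      exact steiner_one G hG hcard he S hS
    · rintro rfl
      obtain ⟨S, -, hS⟩ := Finset.exists_subset_card_eq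
        (show 4 ≤ (Finset.univ : Finset V).card by rw [Finset.card_univ, hcard]; omega)
      exact ⟨S, hS, steiner_one G hG hcard he S hS⟩
  rw [SimpleGraph.kappaBar, hset, csSup_singleton]
end

section
/- Let G be a connected graph with 6 vertices and exactly 7 edges. Then κ̄₄(G) = 1. -/
open SimpleGraph

-- auxiliary lemmas

lemma aux_del_connected {V : Type*} {G : SimpleGraph V} (hG : G.Connected)
    {v w : V} (hadj : G.Adj v w) (hbr : ¬ G.IsBridge s(v, w)) :
    (G \ fromEdgeSet {s(v, w)}).Connected := by
  set G' := G \ fromEdgeSet {s(v, w)} with hG'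
  have hvw : G'.Reachable v w := by
    by_contra hr
    exact hbr hr
  have step : ∀ x y : V, G.Adj x y → G'.Reachable x y := by
    intro x y hxy
    by_cases h : s(x, y) = s(v, w)
    · rw [Sym2.eq_iff] at h
      rcases h with ⟨rfl, rfl⟩ | ⟨rfl, rfl⟩
      · exact hvw
      · exact hvw.symm
    · exact Adj.reachable (by
        rw [hG', sdiff_adj, fromEdgeSet_adj]
        exact ⟨hxy, fun hc => h hc.1⟩)
  have hne : Nonempty V := hG.nonempty
  have hpre : G'.Preconnected := by
    intro x y
    obtain ⟨p⟩ := hG.preconnected x y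
    induction p with
    | nil => exact Reachable.refl _
    | cons h p ih => exact (step _ _ h).trans ih
  exact Connected.mk hpre

lemma aux_exists_tree {V : Type*} [Fintype V] (G : SimpleGraph V) (hG : G.Connected) :
    ∃ T : SimpleGraph V, T ≤ G ∧ T.IsTree := by
  classical
  obtain ⟨n, hn⟩ : ∃ n, G.edgeSet.ncard = n := ⟨_, rfl⟩
  induction n using Nat.strong_induction_on generalizing G with
  | _ n ih =>
    by_cases hac : G.IsAcyclic
    · exact ⟨G, le_refl _, ⟨hG, hac⟩⟩
    · rw [isAcyclic_iff_forall_adj_isBridge] at hac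
      push_neg at hac
      obtain ⟨v, w, hadj, hbr⟩ := hac
      set G' := G \ fromEdgeSet {s(v, w)} with hG'
      have hE' : G'.edgeSet = G.edgeSet \ {s(v, w)} := by
        rw [hG', edgeSet_sdiff, edgeSet_fromEdgeSet, edgeSet_sdiff_sdiff_isDiag]
      have hlt : G'.edgeSet.ncard < n := by
        rw [hE', ← hn]
        have hmem : s(v, w) ∈ G.edgeSet := hadj
        have : (G.edgeSet \ {s(v, w)}).ncard < G.edgeSet.ncard := by
          refine Set.ncard_lt_ncard ?_ (Set.toFinite _)
          constructor
          · exact Set.diff_subset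
          · intro hsub
            exact (hsub hmem).2 rfl
        exact this
      obtain ⟨T, hle, hT⟩ := ih _ hlt G' (aux_del_connected hG hadj hbr) rfl
      exact ⟨T, hle.trans sdiff_le, hT⟩

lemma aux_isTree_of_iso {V W : Type*} {G : SimpleGraph V} {H : SimpleGraph W}
    (e : G ≃g H) (h : G.IsTree) : H.IsTree := by
  constructor
  · exact e.connected_iff.mp h.isConnected
  · intro v c hc
    exact h.IsAcyclic (c.map e.symm.toHom) (hc.map e.symm.toEquiv.injective)

-- edge count of a subgraph that is a tree
lemma aux_tree_count {V : Type*} [Fintype V] {G : SimpleGraph V} (T : G.Subgraph)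
    (h : T.coe.IsTree) : T.edgeSet.ncard + 1 = T.verts.ncard := by
  classical
  have h1 := h.card_edgeFinset
  have h2 : T.coe.edgeFinset.card = T.coe.edgeSet.ncard := by
    rw [← Set.ncard_coe_finset, coe_edgeFinset]
  have h3 : T.coe.edgeSet.ncard = T.edgeSet.ncard := by
    rw [← T.image_coe_edgeSet_coe]
    exact (Set.ncard_image_of_injective _ (Sym2.map.injective Subtype.coe_injective)).symm
  have h4 : Fintype.card ↥T.verts = T.verts.ncard := by
    rw [← Nat.card_coe_set_eq, Nat.card_eq_fintype_card]
  rw [h2, h3, h4] at h1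
  exact h1

lemma aux_cross {V : Type*} {G : SimpleGraph V} (hG : G.Connected) {A : Set V} {x y : V}
    (hx : x ∈ A) (hy : y ∉ A) : ∃ a b, a ∈ A ∧ b ∉ A ∧ G.Adj a b := by
  obtain ⟨p⟩ := hG.preconnected x y
  obtain ⟨d, _, hd1, hd2⟩ := p.exists_boundary_dart A hx hy
  exact ⟨d.fst, d.snd, hd1, hd2, d.adj⟩

lemma aux_no_two {V : Type*} [Fintype V] {G : SimpleGraph V} (hG : G.Connected)
    (hcard : Fintype.card V = 6) (he : G.edgeSet.ncard = 7) {S : Finset V} (hS : S.card = 4)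
    {T₁ T₂ : G.Subgraph} (h₁ : T₁.coe.IsTree) (h₂ : T₂.coe.IsTree)
    (hE : T₁.edgeSet ∩ T₂.edgeSet = ∅) (hV : T₁.verts ∩ T₂.verts = ↑S) : False := by
  classical
  have c₁ := aux_tree_count T₁ h₁
  have c₂ := aux_tree_count T₂ h₂
  have hIE := Set.ncard_union_add_ncard_inter T₁.verts T₂.verts (Set.toFinite _) (Set.toFinite _)
  have hScard : (T₁.verts ∩ T₂.verts).ncard = 4 := by
    rw [hV, Set.ncard_coe_finset, hS]
  have hEsub : T₁.edgeSet ∪ T₂.edgeSet ⊆ G.edgeSet :=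
    Set.union_subset T₁.edgeSet_subset T₂.edgeSet_subset
  have hdisj : Disjoint T₁.edgeSet T₂.edgeSet := Set.disjoint_iff_inter_eq_empty.mpr hE
  have hEu : (T₁.edgeSet ∪ T₂.edgeSet).ncard = T₁.edgeSet.ncard + T₂.edgeSet.ncard :=
    Set.ncard_union_eq hdisj (Set.toFinite _) (Set.toFinite _)
  set L := G.edgeSet \ (T₁.edgeSet ∪ T₂.edgeSet) with hLdef
  have hL : L.ncard + (T₁.edgeSet ∪ T₂.edgeSet).ncard = 7 := by
    rw [hLdef, Set.ncard_diff_add_ncard_of_subset hEsub (Set.toFinite _), he]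
  set W := (T₁.verts ∪ T₂.verts)ᶜ with hWdef
  set u := (T₁.verts ∪ T₂.verts).ncard with hudef
  have hW : u + W.ncard = 6 := by
    have h := Set.ncard_add_ncard_compl (T₁.verts ∪ T₂.verts) (Set.toFinite _) (Set.toFinite _)
    rw [Nat.card_eq_fintype_card, hcard] at h
    exact h
  have hLu : L.ncard + u = 5 := by omega
  have hWu : W.ncard + u = 6 := by omega
  have hSsub : (↑S : Set V) ⊆ T₁.verts ∪ T₂.verts := by
    rw [← hV]; exact Set.inter_subset_left.trans Set.subset_union_left
  have hu4 : 4 ≤ u := by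
    have := Set.ncard_le_ncard hSsub (Set.toFinite _)
    rwa [Set.ncard_coe_finset, hS] at this
  have key : ∀ w ∈ W, ∀ c, G.Adj w c → s(w, c) ∈ L := by
    intro w hw c hadj
    refine ⟨hadj, ?_⟩
    rintro (h1 | h2)
    · exact hw (Or.inl (T₁.mem_verts_of_mem_edge h1 (Sym2.mem_mk_left _ _)))
    · exact hw (Or.inr (T₂.mem_verts_of_mem_edge h2 (Sym2.mem_mk_left _ _)))
  have hSne : (↑S : Set V).Nonempty := by
    rw [Finset.coe_nonempty]
    exact Finset.card_pos.mp (by omega)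
  obtain ⟨s0, hs0⟩ := hSne
  have hs0W : s0 ∉ W := fun h => h (hSsub hs0)
  have hu45 : u = 4 ∨ u = 5 := by omega
  rcases hu45 with hu | hu
  · -- u = 4 : L is a singleton, W has two elements
    have hL1 : L.ncard = 1 := by omega
    have hW2 : W.ncard = 2 := by omega
    obtain ⟨e₀, hLe⟩ := Set.ncard_eq_one.mp hL1
    obtain ⟨w₁, w₂, hne, hWeq⟩ := Set.ncard_eq_two.mp hW2
    have hw₁ : w₁ ∈ W := by rw [hWeq]; exact Or.inl rfl
    obtain ⟨a, b, haW, hbW, hab⟩ := aux_cross hG hw₁ hs0W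
    have heab : s(a, b) = e₀ := by
      have := key a haW b hab
      rwa [hLe, Set.mem_singleton_iff] at this
    -- pick the element of W different from a
    obtain ⟨w', hw'W, hw'a⟩ : ∃ w', w' ∈ W ∧ w' ≠ a := by
      rw [hWeq] at haW
      rcases haW with rfl | rfl
      · exact ⟨w₂, by rw [hWeq]; exact Or.inr rfl, hne.symm⟩
      · exact ⟨w₁, by rw [hWeq]; exact Or.inl rfl, hne⟩
    have hbw' : b ∉ ({w'} : Set V) := by
      intro hb
      rw [Set.mem_singleton_iff] at hb
      exact hbW (hb ▸ hw'W)
    obtain ⟨a', c, ha', hc, hadj'⟩ := aux_cross hG (Set.mem_singleton w') hbw'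
    rw [Set.mem_singleton_iff] at ha'
    subst ha'
    have : s(a', c) = e₀ := by
      have := key a' hw'W c hadj'
      rwa [hLe, Set.mem_singleton_iff] at this
    rw [← heab, Sym2.eq_iff] at this
    rcases this with ⟨rfl, rfl⟩ | ⟨rfl, rfl⟩
    · exact hw'a rfl
    · exact hbW hw'W
  · -- u = 5 : L is empty, W is nonempty
    have hL0 : L.ncard = 0 := by omega
    have hW1 : W.ncard = 1 := by omega
    have hLempty : L = ∅ := (Set.ncard_eq_zero (Set.toFinite _)).mp hL0
    obtain ⟨w, hWeq⟩ := Set.ncard_eq_one.mp hW1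
    have hwW : w ∈ W := by rw [hWeq]; exact rfl
    have hs0w : s0 ∉ ({w} : Set V) := by rw [← hWeq]; exact hs0W
    obtain ⟨a, b, ha, hb, hadj⟩ := aux_cross hG (Set.mem_singleton w) hs0w
    rw [Set.mem_singleton_iff] at ha
    subst ha
    have := key a (hWeq ▸ rfl : a ∈ W) b hadj
    rw [hLempty] at this
    exact this

lemma aux_steiner_eq_one {V : Type*} [Fintype V] {G : SimpleGraph V} (hG : G.Connected)
    (hcard : Fintype.card V = 6) (he : G.edgeSet.ncard = 7) (S : Finset V) (hS : S.card = 4) :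
    G.steinerConn ↑S = 1 := by
  classical
  have hmem1 : 1 ∈ {n : ℕ | ∃ f : Fin n → G.Subgraph,
      (∀ i, G.IsSteinerTree ↑S (f i)) ∧
      ∀ i j, i ≠ j →
        (f i).edgeSet ∩ (f j).edgeSet = ∅ ∧ (f i).verts ∩ (f j).verts = ↑S} := by
    obtain ⟨T, hle, hT⟩ := aux_exists_tree G hG
    refine ⟨fun _ => SimpleGraph.toSubgraph T hle, fun i => ⟨Set.subset_univ _, ?_⟩,
      fun i j hij => absurd (Subsingleton.elim i j) hij⟩
    have iso : (SimpleGraph.toSubgraph T hle).coe ≃g T := by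
      refine ⟨Equiv.Set.univ V, ?_⟩
      intro a b
      simp
      exact Iff.rfl
    exact aux_isTree_of_iso iso.symm hT
  have hbound : ∀ n ∈ {n : ℕ | ∃ f : Fin n → G.Subgraph,
      (∀ i, G.IsSteinerTree ↑S (f i)) ∧
      ∀ i j, i ≠ j →
        (f i).edgeSet ∩ (f j).edgeSet = ∅ ∧ (f i).verts ∩ (f j).verts = ↑S}, n ≤ 1 := by
    rintro n ⟨f, hst, hdisj⟩
    by_contra hn
    push_neg at hn
    have hij : (⟨0, by omega⟩ : Fin n) ≠ ⟨1, by omega⟩ := by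
      intro h
      have := congrArg Fin.val h
      simp at this
    obtain ⟨hE, hV⟩ := hdisj _ _ hij
    exact aux_no_two hG hcard he hS (hst ⟨0, by omega⟩).2 (hst ⟨1, by omega⟩).2 hE hV
  refine le_antisymm (csSup_le ⟨1, hmem1⟩ hbound) (le_csSup ⟨1, hbound⟩ hmem1)

/-- A connected graph with 6 vertices and exactly 7 edges has `κ̄₄(G) = 1`. -/
theorem stmt_9 {V : Type*} [Fintype V] (G : SimpleGraph V) (hG : G.Connected)
    (hcard : Fintype.card V = 6) (he : G.edgeSet.ncard = 7) :
    G.kappaBar 4 = 1 := by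
  classical
  obtain ⟨S, _, hS4⟩ := Finset.exists_subset_card_eq
    (s := (Finset.univ : Finset V)) (n := 4) (by rw [Finset.card_univ, hcard]; omega)
  have hmem : 1 ∈ {m : ℕ | ∃ S : Finset V, S.card = 4 ∧ G.steinerConn ↑S = m} :=
    ⟨S, hS4, aux_steiner_eq_one hG hcard he S hS4⟩
  have hbound : ∀ m ∈ {m : ℕ | ∃ S : Finset V, S.card = 4 ∧ G.steinerConn ↑S = m}, m ≤ 1 := by
    rintro m ⟨S', hS', hm⟩
    rw [← hm, aux_steiner_eq_one hG hcard he S' hS']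
  exact le_antisymm (csSup_le ⟨1, hmem⟩ hbound) (le_csSup ⟨1, hbound⟩ hmem)
end

section
/- Let k ≥ 3 and n = r(k−1) + q with 0 ≤ q ≤ k−2 and n ≥ k. Then there exists a connected graph G on n vertices with κ̄_k(G) = 1 such that e(G) = r·C(k−1, 2) + r − 1 if q = 0, and e(G) = r·C(k−1, 2) + C(q, 2) + r if 1 ≤ q ≤ k−2. Consequently f(n; κ̄_k = 1) ≥ r·C(k−1, 2) + r − 1 if q = 0, and f(n; κ̄_k = 1) ≥ r·C(k−1, 2) + C(q, 2) + r if 1 ≤ q ≤ k−2. -/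
open SimpleGraph

open Finset

/-- Crossing lemma: a walk from a vertex not satisfying `P` to one satisfying `P`
must use an edge crossing the cut. -/
lemma walk_crossing {V : Type*} {H : SimpleGraph V} (P : V → Prop) {u v : V}
    (w : H.Walk u v) : ¬ P u → P v → ∃ x y, H.Adj x y ∧ ¬ P x ∧ P y := by
  induction w with
  | nil => exact fun h h' => absurd h' h
  | @cons a b c h p ih =>
    intro hu hv
    by_cases hb : P b
    · exact ⟨a, b, h, hu, hb⟩
    · exact ih hb hv

/-- The graph made of consecutive cliques (blocks of `K` consecutive vertices)
joined by consecutive bridges. -/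
def myGraph (K n : ℕ) : SimpleGraph (Fin n) :=
  SimpleGraph.fromRel (fun i j => (i : ℕ) / K = (j : ℕ) / K ∨ (i : ℕ) + 1 = (j : ℕ))

lemma myGraph_adj {K n : ℕ} {i j : Fin n} :
    (myGraph K n).Adj i j ↔ i ≠ j ∧ ((i : ℕ) / K = (j : ℕ) / K ∨ (i : ℕ) + 1 = (j : ℕ) ∨
      (j : ℕ) + 1 = (i : ℕ)) := by
  simp only [myGraph, fromRel_adj]
  refine and_congr_right fun _ => ?_
  constructor
  · rintro ((h | h) | (h | h))
    · exact Or.inl h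
    · exact Or.inr (Or.inl h)
    · exact Or.inl h.symm
    · exact Or.inr (Or.inr h)
  · rintro (h | h | h)
    · exact Or.inl (Or.inl h)
    · exact Or.inl (Or.inr h)
    · exact Or.inr (Or.inr h)

lemma cut_edge {K n : ℕ} (hK : 0 < K) {c : ℕ} {i j : Fin n}
    (hadj : (myGraph K n).Adj i j) (hi : (i : ℕ) < c * K) (hj : c * K ≤ (j : ℕ)) :
    (i : ℕ) + 1 = c * K ∧ (j : ℕ) = c * K := by
  obtain ⟨hne, h | h | h⟩ := myGraph_adj.1 hadj
  · exfalso
    have h1 : (i : ℕ) / K < c := (Nat.div_lt_iff_lt_mul hK).2 hi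
    have h2 : c ≤ (j : ℕ) / K := (Nat.le_div_iff_mul_le hK).2 hj
    omega
  · set m := c * K; omega
  · set m := c * K; omega

/-- The spanning path subgraph of `myGraph`. -/
def pathSub (K n : ℕ) : (myGraph K n).Subgraph where
  verts := Set.univ
  Adj a b := (a : ℕ) + 1 = (b : ℕ) ∨ (b : ℕ) + 1 = (a : ℕ)
  adj_sub := by
    intro a b h
    rw [myGraph_adj]
    refine ⟨?_, Or.inr h⟩
    rintro rfl
    omega
  edge_vert := fun _ => Set.mem_univ _
  symm := ⟨by intro a b h; tauto⟩

lemma pathSub_coe_adj {K n : ℕ} {a b : ↥(pathSub K n).verts} :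
    (pathSub K n).coe.Adj a b ↔
      ((a : Fin n) : ℕ) + 1 = ((b : Fin n) : ℕ) ∨ ((b : Fin n) : ℕ) + 1 = ((a : Fin n) : ℕ) :=
  Iff.rfl

lemma pathSub_reach {K n : ℕ} (hn : 0 < n) :
    ∀ (j : ℕ) (hj : j < n),
      (pathSub K n).coe.Reachable ⟨⟨j, hj⟩, Set.mem_univ _⟩ ⟨⟨0, hn⟩, Set.mem_univ _⟩ := by
  intro j
  induction j with
  | zero => exact fun hj => Reachable.refl _
  | succ j ih =>
    intro hj
    have hj' : j < n := Nat.lt_of_succ_lt hj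
    refine Reachable.trans (Adj.reachable ?_) (ih hj')
    exact Or.inr rfl

lemma pathSub_isTree {K n : ℕ} (hn : 0 < n) : (pathSub K n).coe.IsTree := by
  constructor
  · haveI : Nonempty ↥(pathSub K n).verts := ⟨⟨⟨0, hn⟩, Set.mem_univ _⟩⟩
    constructor
    rintro ⟨⟨ja, hja⟩, -⟩ ⟨⟨jb, hjb⟩, -⟩
    exact (pathSub_reach hn ja hja).trans (pathSub_reach hn jb hjb).symm
  · rw [isAcyclic_iff_forall_adj_isBridge]
    have main : ∀ a b : ↥(pathSub K n).verts,
        ((a : Fin n) : ℕ) + 1 = ((b : Fin n) : ℕ) → (pathSub K n).coe.IsBridge s(a, b) := by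
      intro a b h
      rw [isBridge_iff]
      rintro ⟨w⟩
      obtain ⟨x, y, hxy, hx, hy⟩ := walk_crossing
        (fun z : ↥(pathSub K n).verts => ((a : Fin n) : ℕ) < ((z : Fin n) : ℕ)) w
        (by omega) (by omega)
      rw [SimpleGraph.deleteEdges_adj] at hxy
      obtain ⟨h1, h2⟩ := hxy
      rw [pathSub_coe_adj] at h1
      have hxa : x = a := by
        apply Subtype.ext; apply Fin.ext; omega
      have hyb : y = b := by
        apply Subtype.ext; apply Fin.ext; omega
      subst hxa; subst hyb
      apply h2
      exact Set.mem_singleton _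
    intro a b hab
    rcases hab with h | h
    · exact main a b h
    · rw [Sym2.eq_swap]
      exact main b a h

lemma myGraph_connected {K n : ℕ} (hn : 0 < n) : (myGraph K n).Connected := by
  haveI : Nonempty (Fin n) := ⟨⟨0, hn⟩⟩
  have hreach : ∀ (j : ℕ) (hj : j < n), (myGraph K n).Reachable ⟨j, hj⟩ ⟨0, hn⟩ := by
    intro j
    induction j with
    | zero => exact fun hj => Reachable.refl _
    | succ j ih =>
      intro hj
      have hj' : j < n := Nat.lt_of_succ_lt hj
      refine Reachable.trans (Adj.reachable ?_) (ih hj')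
      rw [myGraph_adj]
      refine ⟨?_, Or.inr (Or.inr rfl)⟩
      intro h
      have := congrArg Fin.val h
      simp at this
  constructor
  rintro ⟨ja, hja⟩ ⟨jb, hjb⟩
  exact (hreach ja hja).trans (hreach jb hjb).symm

lemma blocks_small {K n k : ℕ} (hK : 0 < K) (hkK : k = K + 1) (S : Finset (Fin n))
    (hS : S.card = k) : ∃ u ∈ S, ∃ v ∈ S, (u : ℕ) / K < (v : ℕ) / K := by
  by_contra hcon
  push_neg at hcon
  have hne : S.Nonempty := by
    rw [← Finset.card_pos, hS]; omega
  obtain ⟨v0, hv0⟩ := hne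
  have hall : ∀ v ∈ S, (v : ℕ) / K = (v0 : ℕ) / K := fun v hv =>
    le_antisymm (hcon v0 hv0 v hv) (hcon v hv v0 hv0)
  have hsub : S.image (fun v : Fin n => (v : ℕ)) ⊆
      Finset.Ico (K * ((v0 : ℕ) / K)) (K * ((v0 : ℕ) / K) + K) := by
    intro x hx
    obtain ⟨v, hv, rfl⟩ := Finset.mem_image.1 hx
    have h1 := Nat.div_add_mod (v : ℕ) K
    have h2 : (v : ℕ) % K < K := Nat.mod_lt _ hK
    rw [hall v hv] at h1
    rw [Finset.mem_Ico]
    set m := K * ((v0 : ℕ) / K)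
    omega
  have hcard : S.card ≤ K := by
    have h1 : (S.image (fun v : Fin n => (v : ℕ))).card = S.card :=
      Finset.card_image_of_injective S Fin.val_injective
    have h2 := Finset.card_le_card hsub
    rw [h1] at h2
    rwa [Nat.card_Ico, Nat.add_sub_cancel_left] at h2
  omega

/-- Any Steiner tree for a block-splitting `S` contains the bridge edge. -/
lemma bridge_in_tree {K n k : ℕ} (hK : 0 < K) {c : ℕ} (hc1 : (c * K - 1) < n) (hc2 : c * K < n)
    {S : Set (Fin n)} {u v : Fin n} (hu : u ∈ S) (hv : v ∈ S)
    (hub : (u : ℕ) < c * K) (hvb : c * K ≤ (v : ℕ))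
    {T : (myGraph K n).Subgraph} (hT : (myGraph K n).IsSteinerTree S T) :
    s((⟨c * K - 1, hc1⟩ : Fin n), (⟨c * K, hc2⟩ : Fin n)) ∈ T.edgeSet := by
  obtain ⟨hST, htree⟩ := hT
  obtain ⟨w⟩ := htree.isConnected.preconnected ⟨u, hST hu⟩ ⟨v, hST hv⟩
  obtain ⟨x, y, hxy, hx, hy⟩ := walk_crossing
    (fun z : ↥T.verts => c * K ≤ ((z : Fin n) : ℕ)) w (by simp only [not_le]; exact hub)
    (by simpa using hvb)
  rw [SimpleGraph.Subgraph.coe_adj] at hxy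
  have hG : (myGraph K n).Adj ↑x ↑y := hxy.adj_sub
  have hcut := cut_edge hK hG (by omega) hy
  have hx' : (x : Fin n) = ⟨c * K - 1, hc1⟩ := by apply Fin.ext; simp; omega
  have hy' : (y : Fin n) = ⟨c * K, hc2⟩ := by apply Fin.ext; simp; omega
  rw [← hx', ← hy']
  exact Subgraph.mem_edgeSet.2 hxy

lemma steinerConn_eq_one {K n k : ℕ} (hK : 0 < K) (hkK : k = K + 1) (hn : 0 < n)
    (S : Finset (Fin n)) (hS : S.card = k) :
    (myGraph K n).steinerConn ↑S = 1 := by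
  set G := myGraph K n with hG
  have h1 : 1 ∈ {m : ℕ | ∃ f : Fin m → G.Subgraph,
      (∀ i, G.IsSteinerTree ↑S (f i)) ∧
      ∀ i j, i ≠ j →
        (f i).edgeSet ∩ (f j).edgeSet = ∅ ∧ (f i).verts ∩ (f j).verts = ↑S} := by
    refine ⟨fun _ => pathSub K n, fun _ => ⟨fun x _ => Set.mem_univ x, pathSub_isTree hn⟩, ?_⟩
    intro i j hij
    exact absurd (Subsingleton.elim i j) hij
  have hbdd : ∀ m ∈ {m : ℕ | ∃ f : Fin m → G.Subgraph,
      (∀ i, G.IsSteinerTree ↑S (f i)) ∧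
      ∀ i j, i ≠ j →
        (f i).edgeSet ∩ (f j).edgeSet = ∅ ∧ (f i).verts ∩ (f j).verts = ↑S}, m ≤ 1 := by
    rintro m ⟨f, hf, hdisj⟩
    by_contra hm
    push_neg at hm
    have h2m : 2 ≤ m := hm
    set i0 : Fin m := ⟨0, by omega⟩
    set i1 : Fin m := ⟨1, by omega⟩
    have hne : i0 ≠ i1 := by
      intro h; have := congrArg Fin.val h; simp [i0, i1] at this
    obtain ⟨u, hu, v, hv, hlt⟩ := blocks_small hK hkK S hS
    set c := (u : ℕ) / K + 1 with hc
    have hub : (u : ℕ) < c * K := by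
      have := (Nat.div_lt_iff_lt_mul hK).1 (show (u : ℕ) / K < c by omega)
      omega
    have hvb : c * K ≤ (v : ℕ) := by
      have := (Nat.le_div_iff_mul_le hK).1 (show c ≤ (v : ℕ) / K by omega)
      omega
    have hc2 : c * K < n := lt_of_le_of_lt hvb v.isLt
    have hc1 : c * K - 1 < n := by omega
    have key : ∀ i : Fin m,
        s((⟨c * K - 1, hc1⟩ : Fin n), (⟨c * K, hc2⟩ : Fin n)) ∈ (f i).edgeSet := fun i =>
      bridge_in_tree (k := k) hK hc1 hc2 (Finset.mem_coe.2 hu) (Finset.mem_coe.2 hv)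
        hub hvb (hf i)
    have := (hdisj i0 i1 hne).1
    rw [Set.eq_empty_iff_forall_notMem] at this
    exact this _ ⟨key i0, key i1⟩
  rw [SimpleGraph.steinerConn]
  exact le_antisymm (csSup_le ⟨1, h1⟩ hbdd) (le_csSup ⟨1, hbdd⟩ h1)

lemma kappaBar_eq_one {K n k : ℕ} (hK : 0 < K) (hkK : k = K + 1) (hn : 0 < n) (hnk : k ≤ n) :
    (myGraph K n).kappaBar k = 1 := by
  have hM : {m : ℕ | ∃ S : Finset (Fin n), S.card = k ∧ (myGraph K n).steinerConn ↑S = m}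
      = {1} := by
    ext m
    simp only [Set.mem_setOf_eq, Set.mem_singleton_iff]
    constructor
    · rintro ⟨S, hS, rfl⟩
      exact steinerConn_eq_one hK hkK hn S hS
    · rintro rfl
      obtain ⟨S, -, hS⟩ := Finset.exists_subset_card_eq (s := (Finset.univ : Finset (Fin n))) (n := k)
        (by simpa using hnk)
      exact ⟨S, hS, steinerConn_eq_one hK hkK hn S hS⟩
  rw [SimpleGraph.kappaBar, hM, csSup_singleton]

/-- The number of lower neighbours of `j` in the block graph. -/
def gfun (K j : ℕ) : ℕ := j % K + if K ∣ j ∧ j ≠ 0 then 1 else 0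

lemma rangeFilter_card {K : ℕ} (hK : 0 < K) (j : ℕ) :
    ((Finset.range j).filter (fun i => i / K = j / K ∨ i + 1 = j)).card = gfun K j := by
  classical
  rcases eq_or_ne j 0 with rfl | hj0
  · simp [gfun]
  by_cases hdvd : K ∣ j
  · have hfil : (Finset.range j).filter (fun i => i / K = j / K ∨ i + 1 = j) = {j - 1} := by
      ext i
      simp only [Finset.mem_filter, Finset.mem_range, Finset.mem_singleton]
      constructor
      · rintro ⟨hij, h | h⟩
        · exfalso
          have hjK : K * (j / K) = j := Nat.mul_div_cancel' hdvd
          have : i / K < j / K := by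
            apply (Nat.div_lt_iff_lt_mul hK).2
            rw [Nat.mul_comm] at hjK
            omega
          omega
        · omega
      · rintro rfl
        refine ⟨by omega, Or.inr (by omega)⟩
    rw [hfil]
    obtain ⟨t, rfl⟩ := hdvd
    simp only [gfun, Finset.card_singleton, Nat.mul_mod_right, hj0]
    rw [if_pos ⟨Dvd.intro t rfl, hj0⟩]
  · have hlow : K * (j / K) ≤ j := Nat.mul_div_le j K
    have hne : K * (j / K) ≠ j := by
      intro h; exact hdvd ⟨j / K, h.symm⟩
    have hfil : (Finset.range j).filter (fun i => i / K = j / K ∨ i + 1 = j)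
        = Finset.Ico (K * (j / K)) j := by
      ext i
      simp only [Finset.mem_filter, Finset.mem_range, Finset.mem_Ico]
      constructor
      · rintro ⟨hij, h | h⟩
        · have : K * (i / K) ≤ i := Nat.mul_div_le i K
          rw [h] at this
          exact ⟨this, hij⟩
        · set m := K * (j / K); omega
      · rintro ⟨h1, h2⟩
        refine ⟨h2, Or.inl (le_antisymm (Nat.div_le_div_right h2.le) ?_)⟩
        exact (Nat.le_div_iff_mul_le hK).2 (by rw [Nat.mul_comm] at h1; exact h1)
    rw [hfil, Nat.card_Ico]
    have := Nat.div_add_mod j K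
    simp only [gfun, if_neg (fun h : K ∣ j ∧ j ≠ 0 => hdvd h.1)]
    set m := K * (j / K)
    omega

open Classical in
lemma lower_nbrs_card {K n : ℕ} (hK : 0 < K) (j : Fin n) :
    ((Finset.univ : Finset (Fin n)).filter (fun i => i < j ∧ (myGraph K n).Adj i j)).card
      = gfun K (j : ℕ) := by
  classical
  rw [← rangeFilter_card hK (j : ℕ)]
  refine Finset.card_nbij (i := fun i : Fin n => (i : ℕ)) ?_ ?_ ?_
  · intro i hi
    simp only [Finset.mem_coe, Finset.mem_filter, Finset.mem_univ, true_and] at hi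
    obtain ⟨hij, hadj⟩ := hi
    rw [Finset.mem_coe, Finset.mem_filter, Finset.mem_range]
    obtain ⟨hne, h | h | h⟩ := myGraph_adj.1 hadj
    · exact ⟨hij, Or.inl h⟩
    · exact ⟨hij, Or.inr h⟩
    · exfalso
      have : (i : ℕ) < (j : ℕ) := hij
      omega
  · intro a ha b hb hab
    exact Fin.val_injective hab
  · intro x hx
    rw [Finset.mem_coe, Finset.mem_filter, Finset.mem_range] at hx
    obtain ⟨hxj, hor⟩ := hx
    have hxn : x < n := lt_trans hxj j.isLt
    refine ⟨⟨x, hxn⟩, ?_, rfl⟩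
    rw [Finset.mem_coe, Finset.mem_filter]
    refine ⟨Finset.mem_univ _, hxj, ?_⟩
    rw [myGraph_adj]
    constructor
    · intro h
      have := congrArg Fin.val h
      simp only [Fin.val_mk] at this
      omega
    · rcases hor with h | h
      · exact Or.inl h
      · exact Or.inr (Or.inl h)

open Classical in
lemma myGraph_edge_count {K n : ℕ} (hK : 0 < K) :
    (myGraph K n).edgeSet.ncard = ∑ j ∈ Finset.range n, gfun K j := by
  classical
  rw [Set.ncard_eq_toFinset_card']
  have step1 : (myGraph K n).edgeSet.toFinset.card =
      ((Finset.univ : Finset (Fin n × Fin n)).filter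
        (fun p => p.1 < p.2 ∧ (myGraph K n).Adj p.1 p.2)).card := by
    symm
    refine Finset.card_bij (fun p _ => s(p.1, p.2)) ?_ ?_ ?_
    · intro p hp
      simp only [Finset.mem_filter, Finset.mem_univ, true_and] at hp
      rw [Set.mem_toFinset, SimpleGraph.mem_edgeSet]
      exact hp.2
    · intro p1 h1 p2 h2 heq
      simp only [Finset.mem_filter, Finset.mem_univ, true_and] at h1 h2
      rw [Sym2.eq_iff] at heq
      rcases heq with ⟨ha, hb⟩ | ⟨ha, hb⟩
      · exact Prod.ext ha hb
      · exfalso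
        have ha1 := h1.1
        have ha2 := h2.1
        rw [ha, hb] at ha1
        exact absurd (lt_trans ha1 ha2) (lt_irrefl _)
    · intro e he
      rw [Set.mem_toFinset] at he
      induction e with
      | _ x y =>
        rw [SimpleGraph.mem_edgeSet] at he
        rcases lt_or_gt_of_ne he.ne with hlt | hgt
        · exact ⟨(x, y), Finset.mem_filter.2 ⟨Finset.mem_univ _, hlt, he⟩, rfl⟩
        · exact ⟨(y, x), Finset.mem_filter.2 ⟨Finset.mem_univ _, hgt, he.symm⟩, Sym2.eq_swap⟩
  rw [step1, Finset.card_filter, ← Finset.univ_product_univ, Finset.sum_product_right]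
  rw [← Fin.sum_univ_eq_sum_range (fun j => gfun K j) n]
  refine Finset.sum_congr rfl fun j _ => ?_
  rw [← lower_nbrs_card (n := n) hK j, Finset.card_filter]

lemma sum_range_split (f : ℕ → ℕ) (a b : ℕ) :
    ∑ j ∈ Finset.range (a + b), f j
      = ∑ j ∈ Finset.range a, f j + ∑ j ∈ Finset.range b, f (a + j) := by
  have h2 : ∑ i ∈ Finset.Ico a (a + b), f i
      = ∑ i ∈ Finset.range (a + b - a), f (a + i) := Finset.sum_Ico_eq_sum_range f a (a + b)
  rw [Finset.range_eq_Ico,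
    ← Finset.sum_Ico_consecutive f (Nat.zero_le a) (Nat.le_add_right a b),
    h2, Nat.add_sub_cancel_left, ← Finset.range_eq_Ico]

lemma sum_range_id_choose (t : ℕ) : ∑ j ∈ Finset.range t, j = t.choose 2 := by
  have h1 := Finset.sum_range_id_mul_two t
  have h2 : t.choose 2 = t * (t - 1) / 2 := Nat.choose_two_right t
  omega

lemma gfun_block0 {K : ℕ} (hK : 0 < K) {j : ℕ} (hj : j < K) : gfun K j = j := by
  rcases eq_or_ne j 0 with rfl | hj0
  · simp [gfun]
  · have hdvd : ¬ K ∣ j := fun h => hj0 (Nat.eq_zero_of_dvd_of_lt h hj)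
    simp [gfun, Nat.mod_eq_of_lt hj, hdvd]

lemma gfun_block {K : ℕ} (hK : 0 < K) {c j : ℕ} (hc : 0 < c) (hj : j < K) :
    gfun K (c * K + j) = j + if j = 0 then 1 else 0 := by
  have hmod : (c * K + j) % K = j := by
    rw [Nat.add_comm, Nat.add_mul_mod_self_right, Nat.mod_eq_of_lt hj]
  rcases eq_or_ne j 0 with rfl | hj0
  · have hdvd : K ∣ c * K + 0 := ⟨c, by ring⟩
    have hne : c * K + 0 ≠ 0 := by positivity
    simp only [gfun, hmod]
    rw [if_pos ⟨hdvd, hne⟩]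
    simp
  · have hdvd : ¬ K ∣ c * K + j := by
      intro h
      have : K ∣ j := (Nat.dvd_add_right (dvd_mul_left K c)).1 h
      exact hj0 (Nat.eq_zero_of_dvd_of_lt this hj)
    simp [gfun, hmod, hdvd, hj0]

lemma sum_gfun_block0 {K t : ℕ} (hK : 0 < K) (ht : t ≤ K) :
    ∑ j ∈ Finset.range t, gfun K j = t.choose 2 := by
  rw [← sum_range_id_choose]
  refine Finset.sum_congr rfl fun j hj => ?_
  rw [Finset.mem_range] at hj
  exact gfun_block0 hK (lt_of_lt_of_le hj ht)

lemma sum_gfun_block {K c t : ℕ} (hK : 0 < K) (hc : 0 < c) (ht : t ≤ K) :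
    ∑ j ∈ Finset.range t, gfun K (c * K + j)
      = t.choose 2 + if t = 0 then 0 else 1 := by
  have hcong : ∑ j ∈ Finset.range t, gfun K (c * K + j)
      = ∑ j ∈ Finset.range t, (j + if j = 0 then 1 else 0) := by
    refine Finset.sum_congr rfl fun j hj => ?_
    rw [Finset.mem_range] at hj
    exact gfun_block hK hc (lt_of_lt_of_le hj ht)
  rw [hcong, Finset.sum_add_distrib, sum_range_id_choose]
  congr 1
  rcases Nat.eq_zero_or_pos t with rfl | ht0
  · simp
  · rw [Finset.sum_ite_eq' (Finset.range t) 0 (fun _ => 1), if_pos (Finset.mem_range.2 ht0)]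
    simp [ht0.ne']

lemma sum_gfun_mul {K : ℕ} (hK : 0 < K) :
    ∀ r : ℕ, ∑ j ∈ Finset.range (r * K), gfun K j = r * K.choose 2 + r - 1 := by
  intro r
  induction r with
  | zero => simp
  | succ r ih =>
    rw [Nat.succ_mul, sum_range_split, ih]
    rcases Nat.eq_zero_or_pos r with rfl | hr
    · simp [sum_gfun_block0 hK (le_refl K)]
    · have hb := sum_gfun_block hK hr (le_refl K) (t := K)
      rw [hb, if_neg hK.ne']
      have h1 : (r + 1) * K.choose 2 = r * K.choose 2 + K.choose 2 := by ring
      rw [h1]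
      set A := r * K.choose 2
      omega

lemma sum_gfun_total {K r q : ℕ} (hK : 0 < K) (hq : q < K) (hr : 1 ≤ r) :
    ∑ j ∈ Finset.range (r * K + q), gfun K j
      = (if q = 0 then r * K.choose 2 + r - 1 else r * K.choose 2 + q.choose 2 + r) := by
  rw [sum_range_split, sum_gfun_mul hK r]
  rcases eq_or_ne q 0 with rfl | hq0
  · simp
  · rw [sum_gfun_block hK hr hq.le, if_neg hq0, if_neg hq0]
    set A := r * K.choose 2
    set B := q.choose 2
    omega

/-- For `k ≥ 3` and `n = r(k-1) + q` with `0 ≤ q ≤ k-2` and `n ≥ k`, there is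
a connected graph on `n` vertices with `κ̄ₖ = 1` and `r·C(k-1,2) + r - 1` edges if `q = 0`,
resp. `r·C(k-1,2) + C(q,2) + r` edges if `1 ≤ q ≤ k-2`; consequently
`f(n; κ̄ₖ = 1)` is at least this value. -/
theorem stmt_17 (k r q n : ℕ) (hk : 3 ≤ k) (hq : q ≤ k - 2) (hn : n = r * (k - 1) + q)
    (hnk : k ≤ n) :
    (∃ G : SimpleGraph (Fin n), G.Connected ∧ G.kappaBar k = 1 ∧
        G.edgeSet.ncard =
          (if q = 0 then r * (k - 1).choose 2 + r - 1
           else r * (k - 1).choose 2 + q.choose 2 + r)) ∧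
    (if q = 0 then r * (k - 1).choose 2 + r - 1
     else r * (k - 1).choose 2 + q.choose 2 + r) ≤
      sSup {m : ℕ | ∃ G : SimpleGraph (Fin n),
        G.Connected ∧ G.kappaBar k = 1 ∧ G.edgeSet.ncard = m} := by
    classical
  set K := k - 1 with hKdef
  have hK : 0 < K := by omega
  have hkK : k = K + 1 := by omega
  have hn0 : 0 < n := by omega
  have hr : 1 ≤ r := by
    rcases Nat.eq_zero_or_pos r with rfl | h
    · exfalso; rw [zero_mul] at hn; omega
    · exact h
  have hqK : q < K := by omega
  have hcount : (myGraph K n).edgeSet.ncard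
      = (if q = 0 then r * K.choose 2 + r - 1 else r * K.choose 2 + q.choose 2 + r) := by
    rw [myGraph_edge_count hK, hn]
    exact sum_gfun_total hK hqK hr
  refine ⟨⟨myGraph K n, myGraph_connected hn0, kappaBar_eq_one hK hkK hn0 hnk, hcount⟩, ?_⟩
  apply le_csSup
  · refine ⟨Fintype.card (Sym2 (Fin n)), ?_⟩
    rintro m ⟨G', -, -, rfl⟩
    calc G'.edgeSet.ncard ≤ (Set.univ : Set (Sym2 (Fin n))).ncard :=
          Set.ncard_le_ncard (Set.subset_univ _) Set.finite_univ
      _ = Fintype.card (Sym2 (Fin n)) := by rw [Set.ncard_univ, Nat.card_eq_fintype_card]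
  · exact ⟨myGraph K n, myGraph_connected hn0, kappaBar_eq_one hK hkK hn0 hnk, hcount⟩
end

section
/- Let G be the graph on the nine vertices u₁, u₂, u₃, v₁, w₁, v₂, w₂, v₃, w₃ whose edges are the triangle u₁u₂u₃ together with, for each i ∈ {1,2,3}, the triangle u_i v_i w_i (that is, edges u_i v_i, v_i w_i, w_i u_i). Then κ̄₅(G) = 1, even though G contains a cycle (namely u₁u₂u₃) having three ears. -/
open SimpleGraph

/-- The graph on the nine vertices `u₁ = 0, u₂ = 1, u₃ = 2, v₁ = 3, w₁ = 4, v₂ = 5,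
w₂ = 6, v₃ = 7, w₃ = 8` whose edges form the triangle `u₁u₂u₃` together with the triangles
`uᵢvᵢwᵢ` for `i = 1, 2, 3`. -/
def counterexampleGraph : SimpleGraph (Fin 9) :=
  SimpleGraph.fromEdgeSet
    {s(0, 1), s(1, 2), s(2, 0),
     s(0, 3), s(3, 4), s(4, 0),
     s(1, 5), s(5, 6), s(6, 1),
     s(2, 7), s(7, 8), s(8, 2)}

/-! ### Auxiliary material -/

set_option linter.unnecessarySeqFocus false

instance : DecidableRel counterexampleGraph.Adj := fun a b =>
  decidable_of_iff ((s(a,b) = s(0,1) ∨ s(a,b) = s(1,2) ∨ s(a,b) = s(2,0) ∨ s(a,b) = s(0,3) ∨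
    s(a,b) = s(3,4) ∨ s(a,b) = s(4,0) ∨ s(a,b) = s(1,5) ∨ s(a,b) = s(5,6) ∨ s(a,b) = s(6,1) ∨
    s(a,b) = s(2,7) ∨ s(a,b) = s(7,8) ∨ s(a,b) = s(8,2)) ∧ a ≠ b) (by
  rw [counterexampleGraph, fromEdgeSet_adj]
  simp [Set.mem_insert_iff])

/-- Walks crossing out of a region use a boundary edge. -/
lemma cross_walk {R : Finset (Fin 9)} {E : Set (Sym2 (Fin 9))}
    (h : ∀ a b : Fin 9, counterexampleGraph.Adj a b → a ∈ R → b ∉ R → s(a,b) ∈ E) :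
    ∀ {x y : Fin 9} (p : counterexampleGraph.Walk x y), x ∈ R → y ∉ R →
      ∃ e ∈ p.edges, e ∈ E := by
  intro x y p
  induction p with
  | nil => intro hx hy; exact absurd hx hy
  | @cons a b c hadj p ih =>
    intro hx hy
    by_cases hb : b ∈ R
    · obtain ⟨e, he, heE⟩ := ih hb hy
      exact ⟨e, List.mem_cons_of_mem _ he, heE⟩
    · exact ⟨s(a,b), List.mem_cons_self, h a b hadj hx hb⟩

lemma edges_hom_mem {T : counterexampleGraph.Subgraph} {a b : T.verts} (p : T.coe.Walk a b) :
    ∀ e ∈ (p.map T.hom).edges, e ∈ T.edgeSet := by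
  intro e he
  rw [SimpleGraph.Walk.edges_map] at he
  obtain ⟨e', he', rfl⟩ := List.mem_map.mp he
  have h2 := p.edges_subset_edgeSet he'
  induction e' using Sym2.ind with
  | _ u v =>
    have : T.coe.Adj u v := h2
    exact SimpleGraph.Subgraph.mem_edgeSet.mpr this

lemma tree_cross {T : counterexampleGraph.Subgraph} (hc : T.coe.Preconnected)
    {x y : Fin 9} (hx : x ∈ T.verts) (hy : y ∈ T.verts)
    {R : Finset (Fin 9)} {E : Set (Sym2 (Fin 9))}
    (h : ∀ a b : Fin 9, counterexampleGraph.Adj a b → a ∈ R → b ∉ R → s(a,b) ∈ E)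
    (hxR : x ∈ R) (hyR : y ∉ R) :
    ∃ e ∈ T.edgeSet, e ∈ E := by
  obtain ⟨w⟩ := hc ⟨x, hx⟩ ⟨y, hy⟩
  obtain ⟨e, he, heE⟩ := cross_walk h (w.map T.hom) hxR hyR
  exact ⟨e, edges_hom_mem w e he, heE⟩

lemma tri_pick {α β γ a1 a2 a3 : Sym2 (Fin 9)}
    (hαβ : α ≠ β) (hαγ : α ≠ γ) (hβγ : β ≠ γ)
    (h1 : a1 = α ∨ a1 = γ) (h2 : a2 = α ∨ a2 = β) (h3 : a3 = γ ∨ a3 = β) :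
    (a1 ≠ a2 ∨ a1 ≠ a3 ∨ a2 ≠ a3) := by
  rcases h1 with rfl|rfl <;> rcases h2 with rfl|rfl <;> rcases h3 with rfl|rfl <;> tauto

lemma four_in_three {α β γ a1 b1 a2 b2 : Sym2 (Fin 9)}
    (h1 : a1 = α ∨ a1 = β ∨ a1 = γ) (h2 : b1 = α ∨ b1 = β ∨ b1 = γ)
    (h3 : a2 = α ∨ a2 = β ∨ a2 = γ) (h4 : b2 = α ∨ b2 = β ∨ b2 = γ)
    (hab1 : a1 ≠ b1) (hab2 : a2 ≠ b2)
    (d1 : a1 ≠ a2) (d2 : a1 ≠ b2) (d3 : b1 ≠ a2) (d4 : b1 ≠ b2) : False := by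
  rcases h1 with rfl|rfl|rfl <;> rcases h2 with h2|h2|h2 <;>
    rcases h3 with h3|h3|h3 <;> rcases h4 with h4|h4|h4 <;> subst_vars <;> tauto

lemma tri_general {T : counterexampleGraph.Subgraph} (hc : T.coe.Preconnected)
    {x y z : Fin 9} (hx : x ∈ T.verts) (hy : y ∈ T.verts) (hz : z ∈ T.verts)
    {R1 R2 R3 : Finset (Fin 9)} {α β γ : Sym2 (Fin 9)}
    (hαβ : α ≠ β) (hαγ : α ≠ γ) (hβγ : β ≠ γ)
    (hx1 : x ∈ R1) (hy1 : y ∉ R1) (hy2 : y ∈ R2) (hz2 : z ∉ R2)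
    (hz3 : z ∈ R3) (hx3 : x ∉ R3)
    (b1 : ∀ a b : Fin 9, counterexampleGraph.Adj a b → a ∈ R1 → b ∉ R1 →
      s(a,b) = α ∨ s(a,b) = γ)
    (b2 : ∀ a b : Fin 9, counterexampleGraph.Adj a b → a ∈ R2 → b ∉ R2 →
      s(a,b) = α ∨ s(a,b) = β)
    (b3 : ∀ a b : Fin 9, counterexampleGraph.Adj a b → a ∈ R3 → b ∉ R3 →
      s(a,b) = γ ∨ s(a,b) = β) :
    ∃ a b, a ∈ T.edgeSet ∧ b ∈ T.edgeSet ∧ a ≠ b ∧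
      (a = α ∨ a = β ∨ a = γ) ∧ (b = α ∨ b = β ∨ b = γ) := by
  obtain ⟨e1, he1, hm1⟩ := tree_cross hc hx hy (E := {e | e = α ∨ e = γ}) b1 hx1 hy1
  obtain ⟨e2, he2, hm2⟩ := tree_cross hc hy hz (E := {e | e = α ∨ e = β}) b2 hy2 hz2
  obtain ⟨e3, he3, hm3⟩ := tree_cross hc hz hx (E := {e | e = γ ∨ e = β}) b3 hz3 hx3
  simp only [Set.mem_setOf_eq] at hm1 hm2 hm3
  rcases tri_pick hαβ hαγ hβγ hm1 hm2 hm3 with hne | hne | hne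
  · exact ⟨e1, e2, he1, he2, hne, by tauto, by tauto⟩
  · exact ⟨e1, e3, he1, he3, hne, by tauto, by tauto⟩
  · exact ⟨e2, e3, he2, he3, hne, by tauto, by tauto⟩

def AF : Finset (Fin 9) := {0,3,4}
def BF : Finset (Fin 9) := {1,5,6}
def CF : Finset (Fin 9) := {2,7,8}

lemma region_case (S : Finset (Fin 9)) (hS : S.card = 5) :
    ((∃ a ∈ S, a ∈ AF) ∧ (∃ b ∈ S, b ∈ BF) ∧ (∃ c ∈ S, c ∈ CF)) ∨
      AF ⊆ S ∨ BF ⊆ S ∨ CF ⊆ S := by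
  have key : ∀ (X Y Z : Finset (Fin 9)), X.card = 3 → Y.card = 3 →
      (∀ v : Fin 9, v ∈ X ∨ v ∈ Y ∨ v ∈ Z) → (¬ ∃ c ∈ S, c ∈ Z) →
      X ⊆ S ∨ Y ⊆ S := by
    intro X Y Z hX hY hcov hZ
    have hsub : S ⊆ X ∪ Y := by
      intro v hv
      rcases hcov v with h | h | h
      · exact Finset.mem_union_left _ h
      · exact Finset.mem_union_right _ h
      · exact absurd ⟨v, hv, h⟩ hZ
    have h1 : S.card ≤ (S ∩ X).card + (S ∩ Y).card := by
      have : S = S ∩ (X ∪ Y) := (Finset.inter_eq_left.mpr hsub).symm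
      conv_lhs => rw [this, Finset.inter_union_distrib_left]
      apply Finset.card_union_le
    have h2 : (S ∩ X).card ≤ 3 := hX ▸ Finset.card_le_card Finset.inter_subset_right
    have h3 : (S ∩ Y).card ≤ 3 := hY ▸ Finset.card_le_card Finset.inter_subset_right
    rcases (by omega : (S ∩ X).card = 3 ∨ (S ∩ Y).card = 3) with h | h
    · left
      have := Finset.eq_of_subset_of_card_le Finset.inter_subset_right
        (by omega : X.card ≤ (S ∩ X).card)
      rw [← this]
      exact Finset.inter_subset_left
    · right
      have := Finset.eq_of_subset_of_card_le Finset.inter_subset_right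
        (by omega : Y.card ≤ (S ∩ Y).card)
      rw [← this]
      exact Finset.inter_subset_left
  by_cases hA : ∃ a ∈ S, a ∈ AF
  · by_cases hB : ∃ b ∈ S, b ∈ BF
    · by_cases hC : ∃ c ∈ S, c ∈ CF
      · exact Or.inl ⟨hA, hB, hC⟩
      · rcases key AF BF CF (by decide) (by decide) (by decide) hC with h | h
        · exact Or.inr (Or.inl h)
        · exact Or.inr (Or.inr (Or.inl h))
    · rcases key AF CF BF (by decide) (by decide) (by decide) hB with h | h
      · exact Or.inr (Or.inl h)
      · exact Or.inr (Or.inr (Or.inr h))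
  · rcases key BF CF AF (by decide) (by decide) (by decide) hA with h | h
    · exact Or.inr (Or.inr (Or.inl h))
    · exact Or.inr (Or.inr (Or.inr h))

lemma no_two (S : Finset (Fin 9)) (hS : S.card = 5)
    (T₁ T₂ : counterexampleGraph.Subgraph)
    (hs₁ : (↑S : Set (Fin 9)) ⊆ T₁.verts) (hc₁ : T₁.coe.Preconnected)
    (hs₂ : (↑S : Set (Fin 9)) ⊆ T₂.verts) (hc₂ : T₂.coe.Preconnected)
    (hE : T₁.edgeSet ∩ T₂.edgeSet = ∅) : False := by
  have mem₁ : ∀ v ∈ S, v ∈ T₁.verts := fun v hv => hs₁ (Finset.mem_coe.mpr hv)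
  have mem₂ : ∀ v ∈ S, v ∈ T₂.verts := fun v hv => hs₂ (Finset.mem_coe.mpr hv)
  have disj : ∀ e, e ∈ T₁.edgeSet → e ∈ T₂.edgeSet → False := fun e h1 h2 => by
    have : e ∈ T₁.edgeSet ∩ T₂.edgeSet := ⟨h1, h2⟩
    rw [hE] at this; exact this
  rcases region_case S hS with ⟨⟨a, ha, haA⟩, ⟨b, hb, hbB⟩, ⟨c, hc, hcC⟩⟩ | hA | hB | hC
  · have notA : ∀ v : Fin 9, v ∈ BF → v ∉ AF := by decide
    have notB : ∀ v : Fin 9, v ∈ CF → v ∉ BF := by decide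
    have notC : ∀ v : Fin 9, v ∈ AF → v ∉ CF := by decide
    obtain ⟨a1, b1, ha1, hb1, hne1, hm1, hm1'⟩ := tri_general hc₁ (mem₁ a ha) (mem₁ b hb)
      (mem₁ c hc) (α := s(0,1)) (β := s(1,2)) (γ := s(0,2)) (by decide) (by decide) (by decide)
      haA (notA b hbB) hbB (notB c hcC) hcC (notC a haA) (by decide) (by decide) (by decide)
    obtain ⟨a2, b2, ha2, hb2, hne2, hm2, hm2'⟩ := tri_general hc₂ (mem₂ a ha) (mem₂ b hb)
      (mem₂ c hc) (α := s(0,1)) (β := s(1,2)) (γ := s(0,2)) (by decide) (by decide) (by decide)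
      haA (notA b hbB) hbB (notB c hcC) hcC (notC a haA) (by decide) (by decide) (by decide)
    exact four_in_three hm1 hm1' hm2 hm2' hne1 hne2 (fun h => disj _ ha1 (h ▸ ha2))
      (fun h => disj _ ha1 (h ▸ hb2)) (fun h => disj _ hb1 (h ▸ ha2))
      (fun h => disj _ hb1 (h ▸ hb2))
  · obtain ⟨a1, b1, ha1, hb1, hne1, hm1, hm1'⟩ := tri_general hc₁
      (mem₁ 3 (hA (by decide))) (mem₁ 0 (hA (by decide))) (mem₁ 4 (hA (by decide)))
      (R1 := {3}) (R2 := {0,1,2,5,6,7,8}) (R3 := {4})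
      (α := s(0,3)) (β := s(0,4)) (γ := s(3,4)) (by decide) (by decide) (by decide)
      (by decide) (by decide) (by decide) (by decide) (by decide) (by decide)
      (by decide) (by decide) (by decide)
    obtain ⟨a2, b2, ha2, hb2, hne2, hm2, hm2'⟩ := tri_general hc₂
      (mem₂ 3 (hA (by decide))) (mem₂ 0 (hA (by decide))) (mem₂ 4 (hA (by decide)))
      (R1 := {3}) (R2 := {0,1,2,5,6,7,8}) (R3 := {4})
      (α := s(0,3)) (β := s(0,4)) (γ := s(3,4)) (by decide) (by decide) (by decide)
      (by decide) (by decide) (by decide) (by decide) (by decide) (by decide)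
      (by decide) (by decide) (by decide)
    exact four_in_three hm1 hm1' hm2 hm2' hne1 hne2 (fun h => disj _ ha1 (h ▸ ha2))
      (fun h => disj _ ha1 (h ▸ hb2)) (fun h => disj _ hb1 (h ▸ ha2))
      (fun h => disj _ hb1 (h ▸ hb2))
  · obtain ⟨a1, b1, ha1, hb1, hne1, hm1, hm1'⟩ := tri_general hc₁
      (mem₁ 5 (hB (by decide))) (mem₁ 1 (hB (by decide))) (mem₁ 6 (hB (by decide)))
      (R1 := {5}) (R2 := {0,1,2,3,4,7,8}) (R3 := {6})
      (α := s(1,5)) (β := s(1,6)) (γ := s(5,6)) (by decide) (by decide) (by decide)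
      (by decide) (by decide) (by decide) (by decide) (by decide) (by decide)
      (by decide) (by decide) (by decide)
    obtain ⟨a2, b2, ha2, hb2, hne2, hm2, hm2'⟩ := tri_general hc₂
      (mem₂ 5 (hB (by decide))) (mem₂ 1 (hB (by decide))) (mem₂ 6 (hB (by decide)))
      (R1 := {5}) (R2 := {0,1,2,3,4,7,8}) (R3 := {6})
      (α := s(1,5)) (β := s(1,6)) (γ := s(5,6)) (by decide) (by decide) (by decide)
      (by decide) (by decide) (by decide) (by decide) (by decide) (by decide)
      (by decide) (by decide) (by decide)
    exact four_in_three hm1 hm1' hm2 hm2' hne1 hne2 (fun h => disj _ ha1 (h ▸ ha2))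
      (fun h => disj _ ha1 (h ▸ hb2)) (fun h => disj _ hb1 (h ▸ ha2))
      (fun h => disj _ hb1 (h ▸ hb2))
  · obtain ⟨a1, b1, ha1, hb1, hne1, hm1, hm1'⟩ := tri_general hc₁
      (mem₁ 7 (hC (by decide))) (mem₁ 2 (hC (by decide))) (mem₁ 8 (hC (by decide)))
      (R1 := {7}) (R2 := {0,1,2,3,4,5,6}) (R3 := {8})
      (α := s(2,7)) (β := s(2,8)) (γ := s(7,8)) (by decide) (by decide) (by decide)
      (by decide) (by decide) (by decide) (by decide) (by decide) (by decide)
      (by decide) (by decide) (by decide)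
    obtain ⟨a2, b2, ha2, hb2, hne2, hm2, hm2'⟩ := tri_general hc₂
      (mem₂ 7 (hC (by decide))) (mem₂ 2 (hC (by decide))) (mem₂ 8 (hC (by decide)))
      (R1 := {7}) (R2 := {0,1,2,3,4,5,6}) (R3 := {8})
      (α := s(2,7)) (β := s(2,8)) (γ := s(7,8)) (by decide) (by decide) (by decide)
      (by decide) (by decide) (by decide) (by decide) (by decide) (by decide)
      (by decide) (by decide) (by decide)
    exact four_in_three hm1 hm1' hm2 hm2' hne1 hne2 (fun h => disj _ ha1 (h ▸ ha2))
      (fun h => disj _ ha1 (h ▸ hb2)) (fun h => disj _ hb1 (h ▸ ha2))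
      (fun h => disj _ hb1 (h ▸ hb2))

/-! ### The witness Steiner tree -/

def E0 : Finset (Sym2 (Fin 9)) := {s(0,3), s(0,1), s(1,2), s(1,5)}
def S0 : Finset (Fin 9) := {0,1,2,3,5}

def T0 : counterexampleGraph.Subgraph where
  verts := ↑S0
  Adj a b := s(a,b) ∈ E0
  adj_sub := by
    intro a b h
    revert h
    revert b
    revert a
    decide
  edge_vert := by
    intro a b h
    have : a ∈ S0 := by revert h; revert b; revert a; decide
    exact Finset.mem_coe.mpr this
  symm := by
    constructor
    intro a b h
    have e : s(b,a) = s(a,b) := Sym2.eq_swap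
    show s(b,a) ∈ E0
    rw [e]; exact h

lemma T0cadj {a b : T0.verts} (h : s(a.1, b.1) ∈ E0) : T0.coe.Adj a b := h

lemma T0mem (a : Fin 9) (h : a ∈ S0) : a ∈ T0.verts := Finset.mem_coe.mpr h

lemma T0_connected : T0.coe.Connected := by
  have h1 : (1 : Fin 9) ∈ T0.verts := Finset.mem_coe.mpr (by decide)
  have key : ∀ w : T0.verts, T0.coe.Reachable w ⟨1, h1⟩ := by
    rintro ⟨w, hw⟩
    have hw' : w ∈ S0 := Finset.mem_coe.mp hw
    fin_cases hw'
    · exact Walk.reachable (Walk.cons (T0cadj (show s((0:Fin 9),1) ∈ E0 by decide)) Walk.nil)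
    · exact Walk.reachable Walk.nil
    · exact Walk.reachable (Walk.cons (T0cadj (show s((2:Fin 9),1) ∈ E0 by decide)) Walk.nil)
    · exact Walk.reachable
        (Walk.cons (v := ⟨0, T0mem 0 (by decide)⟩)
          (T0cadj (show s((3:Fin 9),0) ∈ E0 by decide))
          (Walk.cons (T0cadj (show s((0:Fin 9),1) ∈ E0 by decide)) Walk.nil))
    · exact Walk.reachable (Walk.cons (T0cadj (show s((5:Fin 9),1) ∈ E0 by decide)) Walk.nil)
  haveI : Nonempty T0.verts := ⟨⟨1, h1⟩⟩
  exact Connected.mk fun u v => (key u).trans (key v).symm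

lemma T0_edge_mem : ∀ e ∈ T0.edgeSet,
    e = s(0,3) ∨ e = s(0,1) ∨ e = s(1,2) ∨ e = s(1,5) := by
  intro e he
  induction e using Sym2.ind with
  | _ a b =>
    have h : s(a,b) ∈ E0 := he
    exact (by decide : ∀ a b : Fin 9, s(a,b) ∈ E0 →
      (s(a,b) = s(0,3) ∨ s(a,b) = s(0,1) ∨ s(a,b) = s(1,2) ∨ s(a,b) = s(1,5))) a b h

lemma no_cycle_T0 (v : Fin 9) (c : counterexampleGraph.Walk v v) (hc : c.IsCycle)
    (hE : ∀ e ∈ c.edges, e = s(0,3) ∨ e = s(0,1) ∨ e = s(1,2) ∨ e = s(1,5)) : False := by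
  have hnodup : c.edges.Nodup := hc.isCircuit.isTrail.edges_nodup
  have hlen : 3 ≤ c.length := hc.three_le_length
  have hlen' : c.edges.length = c.length := c.length_edges
  have key : s(0,3) ∈ c.edges ∨ s(1,2) ∈ c.edges := by
    by_contra hcon
    push_neg at hcon
    have hsub : c.edges.toFinset ⊆ {s(0,1), s(1,5)} := by
      intro e he
      rcases hE e (List.mem_toFinset.mp he) with h | h | h | h
      · exact absurd (h ▸ List.mem_toFinset.mp he) hcon.1
      · simp [h]
      · exact absurd (h ▸ List.mem_toFinset.mp he) hcon.2
      · simp [h]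
    have hcard := Finset.card_le_card hsub
    rw [List.toFinset_card_of_nodup hnodup] at hcard
    have h2 : ({s(0,1), s(1,5)} : Finset (Sym2 (Fin 9))).card ≤ 2 := by decide
    omega
  rcases key with hkey | hkey
  · have h3 : (3 : Fin 9) ∈ c.support := c.snd_mem_support_of_mem_edges hkey
    set c' := c.rotate 3 h3 with hc'def
    have hc' : c'.IsCycle := hc.rotate h3
    have hE' : ∀ e ∈ c'.edges, e = s(0,3) ∨ e = s(0,1) ∨ e = s(1,2) ∨ e = s(1,5) :=
      fun e he => hE e ((c.rotate_edges 3 h3).mem_iff.mp he)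
    clear_value c'
    cases c' with
    | nil => exact Walk.IsCycle.not_of_nil hc'
    | @cons _ w _ hadj p =>
      rw [Walk.cons_isCycle_iff] at hc'
      have hfirst : s((3:Fin 9), w) ∈ (Walk.cons hadj p).edges := List.mem_cons_self
      have hw0 : w = 0 := by
        rcases hE' _ hfirst with h | h | h | h <;> simp [Sym2.eq_iff] at h <;> try exact h
      subst hw0
      have hpe : ∀ e ∈ p.edges, e = s(0,3) ∨ e = s(0,1) ∨ e = s(1,2) ∨ e = s(1,5) :=
        fun e he => hE' e (List.mem_cons_of_mem _ he)
      obtain ⟨e, he, hbd⟩ := cross_walk (R := {0,1,2,4,5,6,7,8})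
        (E := {e | e = s(0,3) ∨ e = s(3,4)}) (by decide) p (by decide) (by decide)
      rcases hbd with rfl | rfl
      · exact hc'.2 (by rw [show s((3:Fin 9),0) = s(0,3) from by decide]; exact he)
      · rcases hpe _ he with h | h | h | h <;> revert h <;> decide
  · have h2 : (2 : Fin 9) ∈ c.support := c.snd_mem_support_of_mem_edges hkey
    set c' := c.rotate 2 h2 with hc'def
    have hc' : c'.IsCycle := hc.rotate h2
    have hE' : ∀ e ∈ c'.edges, e = s(0,3) ∨ e = s(0,1) ∨ e = s(1,2) ∨ e = s(1,5) :=
      fun e he => hE e ((c.rotate_edges 2 h2).mem_iff.mp he)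
    clear_value c'
    cases c' with
    | nil => exact Walk.IsCycle.not_of_nil hc'
    | @cons _ w _ hadj p =>
      rw [Walk.cons_isCycle_iff] at hc'
      have hfirst : s((2:Fin 9), w) ∈ (Walk.cons hadj p).edges := List.mem_cons_self
      have hw0 : w = 1 := by
        rcases hE' _ hfirst with h | h | h | h <;> simp [Sym2.eq_iff] at h <;> try exact h
      subst hw0
      have hpe : ∀ e ∈ p.edges, e = s(0,3) ∨ e = s(0,1) ∨ e = s(1,2) ∨ e = s(1,5) :=
        fun e he => hE' e (List.mem_cons_of_mem _ he)
      obtain ⟨e, he, hbd⟩ := cross_walk (R := {0,1,3,4,5,6,7,8})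
        (E := {e | e = s(1,2) ∨ e = s(0,2) ∨ e = s(2,7) ∨ e = s(2,8)}) (by decide) p
        (by decide) (by decide)
      rcases hbd with rfl | rfl | rfl | rfl
      · exact hc'.2 (by rw [show s((2:Fin 9),1) = s(1,2) from by decide]; exact he)
      · rcases hpe _ he with h | h | h | h <;> revert h <;> decide
      · rcases hpe _ he with h | h | h | h <;> revert h <;> decide
      · rcases hpe _ he with h | h | h | h <;> revert h <;> decide

lemma T0_isTree : T0.coe.IsTree := by
  refine ⟨T0_connected, ?_⟩
  intro v c hcyc
  have hc' : (c.map T0.hom).IsCycle := hcyc.map Subgraph.hom_injective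
  exact no_cycle_T0 _ _ hc' (fun e he => T0_edge_mem e (edges_hom_mem c e he))

/-! ### Computing the Steiner connectivity -/

lemma zero_mem_steiner (S : Set (Fin 9)) :
    0 ∈ {n : ℕ | ∃ f : Fin n → counterexampleGraph.Subgraph,
      (∀ i, counterexampleGraph.IsSteinerTree S (f i)) ∧
      ∀ i j, i ≠ j →
        (f i).edgeSet ∩ (f j).edgeSet = ∅ ∧ (f i).verts ∩ (f j).verts = S} :=
  ⟨fun i => i.elim0, fun i => i.elim0, fun i => i.elim0⟩

lemma steiner_bound (S : Finset (Fin 9)) (hS : S.card = 5) :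
    ∀ n ∈ {n : ℕ | ∃ f : Fin n → counterexampleGraph.Subgraph,
      (∀ i, counterexampleGraph.IsSteinerTree (↑S) (f i)) ∧
      ∀ i j, i ≠ j →
        (f i).edgeSet ∩ (f j).edgeSet = ∅ ∧ (f i).verts ∩ (f j).verts = ↑S}, n ≤ 1 := by
  rintro n ⟨f, hf, hdisj⟩
  by_contra hn
  push_neg at hn
  have h0 : (0 : ℕ) < n := by omega
  have h1 : (1 : ℕ) < n := by omega
  have hne : (⟨0, h0⟩ : Fin n) ≠ ⟨1, h1⟩ := by simp [Fin.ext_iff]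
  obtain ⟨hEd, _⟩ := hdisj _ _ hne
  exact no_two S hS (f ⟨0, h0⟩) (f ⟨1, h1⟩)
    (hf _).1 (hf _).2.isConnected.preconnected
    (hf _).1 (hf _).2.isConnected.preconnected hEd

lemma steiner_le_one (S : Finset (Fin 9)) (hS : S.card = 5) :
    counterexampleGraph.steinerConn ↑S ≤ 1 := by
  unfold SimpleGraph.steinerConn
  exact csSup_le ⟨0, zero_mem_steiner ↑S⟩ (steiner_bound S hS)

lemma steiner_S0 : counterexampleGraph.steinerConn ↑S0 = 1 := by
  refine le_antisymm (steiner_le_one S0 (by decide)) ?_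
  unfold SimpleGraph.steinerConn
  have hbdd : BddAbove {n : ℕ | ∃ f : Fin n → counterexampleGraph.Subgraph,
      (∀ i, counterexampleGraph.IsSteinerTree (↑S0) (f i)) ∧
      ∀ i j, i ≠ j →
        (f i).edgeSet ∩ (f j).edgeSet = ∅ ∧ (f i).verts ∩ (f j).verts = ↑S0} :=
    ⟨1, fun n hn => steiner_bound S0 (by decide) n hn⟩
  have hmem : (1 : ℕ) ∈ {n : ℕ | ∃ f : Fin n → counterexampleGraph.Subgraph,
      (∀ i, counterexampleGraph.IsSteinerTree (↑S0) (f i)) ∧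
      ∀ i j, i ≠ j →
        (f i).edgeSet ∩ (f j).edgeSet = ∅ ∧ (f i).verts ∩ (f j).verts = ↑S0} :=
    ⟨fun _ => T0, fun _ => ⟨subset_rfl, T0_isTree⟩,
      fun i j hij => absurd (Subsingleton.elim i j) hij⟩
  exact le_csSup hbdd hmem

lemma kappaBar_eq : counterexampleGraph.kappaBar 5 = 1 := by
  unfold SimpleGraph.kappaBar
  have hmem : (1 : ℕ) ∈ {m : ℕ | ∃ S : Finset (Fin 9), S.card = 5 ∧
      counterexampleGraph.steinerConn ↑S = m} := ⟨S0, by decide, steiner_S0⟩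
  have hub : ∀ m ∈ {m : ℕ | ∃ S : Finset (Fin 9), S.card = 5 ∧
      counterexampleGraph.steinerConn ↑S = m}, m ≤ 1 := by
    rintro m ⟨S, hScard, rfl⟩
    exact steiner_le_one S hScard
  exact le_antisymm (csSup_le ⟨1, hmem⟩ hub) (le_csSup ⟨1, hub⟩ hmem)

/-! ### The cycle and its three ears -/

def cyc : counterexampleGraph.Walk 0 0 :=
  .cons (by decide) (.cons (by decide : counterexampleGraph.Adj 1 2)
    (.cons (by decide : counterexampleGraph.Adj 2 0) .nil))

def ear1 : counterexampleGraph.Walk 0 0 :=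
  .cons (by decide : counterexampleGraph.Adj 0 3) (.cons (by decide : counterexampleGraph.Adj 3 4)
    (.cons (by decide : counterexampleGraph.Adj 4 0) .nil))

def ear2 : counterexampleGraph.Walk 1 1 :=
  .cons (by decide : counterexampleGraph.Adj 1 5) (.cons (by decide : counterexampleGraph.Adj 5 6)
    (.cons (by decide : counterexampleGraph.Adj 6 1) .nil))

def ear3 : counterexampleGraph.Walk 2 2 :=
  .cons (by decide : counterexampleGraph.Adj 2 7) (.cons (by decide : counterexampleGraph.Adj 7 8)
    (.cons (by decide : counterexampleGraph.Adj 8 2) .nil))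

lemma cyc_isCycle : cyc.IsCycle := by
  rw [SimpleGraph.Walk.isCycle_def]
  refine ⟨⟨by decide⟩, by simp [cyc], by decide⟩

lemma edges_ne {u1 v1 u2 v2 : Fin 9} (p : counterexampleGraph.Walk u1 v1)
    (q : counterexampleGraph.Walk u2 v2) (e : Sym2 (Fin 9))
    (h1 : e ∈ p.edges) (h2 : ¬ e ∈ q.edges) :
    {e | e ∈ p.edges} ≠ {e | e ∈ q.edges} := by
  intro h
  have h1' : e ∈ {e | e ∈ p.edges} := h1
  rw [h] at h1'
  exact absurd h1' h2

/-- For the graph above, `κ̄₅(G) = 1`, even though `G` contains a cycle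
(namely the one on `{u₁, u₂, u₃} = {0, 1, 2}`) having three (pairwise distinct) ears. -/
theorem stmt_18 :
    counterexampleGraph.kappaBar 5 = 1 ∧
    ∃ (x : Fin 9) (c : counterexampleGraph.Walk x x), c.IsCycle ∧
      {v | v ∈ c.support} = ({0, 1, 2} : Set (Fin 9)) ∧
      ∃ (u₁ v₁ u₂ v₂ u₃ v₃ : Fin 9)
        (p₁ : counterexampleGraph.Walk u₁ v₁) (p₂ : counterexampleGraph.Walk u₂ v₂)
        (p₃ : counterexampleGraph.Walk u₃ v₃),
        counterexampleGraph.IsEar c p₁ ∧ counterexampleGraph.IsEar c p₂ ∧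
        counterexampleGraph.IsEar c p₃ ∧
        {e | e ∈ p₁.edges} ≠ {e | e ∈ p₂.edges} ∧
        {e | e ∈ p₁.edges} ≠ {e | e ∈ p₃.edges} ∧
        {e | e ∈ p₂.edges} ≠ {e | e ∈ p₃.edges} := by
  refine ⟨kappaBar_eq, 0, cyc, cyc_isCycle, ?_, 0, 0, 1, 1, 2, 2, ear1, ear2, ear3,
    ⟨by decide, by decide, by decide, by decide, Or.inl rfl, by decide⟩,
    ⟨by decide, by decide, by decide, by decide, Or.inl rfl, by decide⟩,
    ⟨by decide, by decide, by decide, by decide, Or.inl rfl, by decide⟩,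
    edges_ne _ _ s((0:Fin 9),3) (by decide) (by decide),
    edges_ne _ _ s((0:Fin 9),3) (by decide) (by decide),
    edges_ne _ _ s((1:Fin 9),5) (by decide) (by decide)⟩
  ext v
  simp only [Set.mem_setOf_eq, Set.mem_insert_iff, Set.mem_singleton_iff]
  revert v
  decide
end
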